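/- arXiv:2007.13032 — 15 statements merged into one kernel-verified Lean document; each statement's English description precedes it below -/
import Mathlib

section
/- If a mapping f: Y → Z between topological spaces is quasi-continuous and feebly open, then f is δ-open, i.e., for every nowhere dense subset N of Z, the preimage f⁻¹(N) is nowhere dense in Y. -/
open Set Function Topology

def QuasiCont {X Y : Type*} [TopologicalSpace X] [TopologicalSpace Y] (f : X → Y) : Prop :=
  ∀ (x : X) (W : Set Y), IsOpen W → f x ∈ W → ∀ U : Set X, IsOpen U → x ∈ U →
    ∃ V : Set X, IsOpen V ∧ V.Nonempty ∧ V ⊆ U ∧ f '' V ⊆ W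

def Nplus {X : Type*} (f : X → X) (A B : Set X) : Set ℕ :=
  {n : ℕ | (f^[n] '' A ∩ B).Nonempty}

def omegaLimitSet {X : Type*} [TopologicalSpace X] (f : X → X) (x : X) : Set X :=
  ⋂ k : ℕ, closure {y : X | ∃ n ≥ k, f^[n] x = y}

/-- TT: for all nonempty open U, V, N(U,V) = N₊(U,V) ∪ N₊(V,U) is nonempty. -/
def TTprop {X : Type*} [TopologicalSpace X] (f : X → X) : Prop :=
  ∀ U V : Set X, IsOpen U → U.Nonempty → IsOpen V → V.Nonempty →
    (Nplus f U V ∪ Nplus f V U).Nonempty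

/-- TT₊ -/
def TTplus {X : Type*} [TopologicalSpace X] (f : X → X) : Prop :=
  ∀ U V : Set X, IsOpen U → U.Nonempty → IsOpen V → V.Nonempty →
    (Nplus f U V).Nonempty

/-- X has a countable π-base. -/
def CountablePiBase (X : Type*) [TopologicalSpace X] : Prop :=
  ∃ P : ℕ → Set X, (∀ n, IsOpen (P n) ∧ (P n).Nonempty) ∧
    ∀ U : Set X, IsOpen U → U.Nonempty → ∃ n, P n ⊆ U

/-- X is perfect: no isolated points. -/
def PerfectPhase (X : Type*) [TopologicalSpace X] : Prop :=
  ∀ x : X, ¬ IsOpen ({x} : Set X)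

theorem quasicont_feeblyOpen_deltaOpen {Y Z : Type*} [TopologicalSpace Y] [TopologicalSpace Z]
    (f : Y → Z) (hqc : QuasiCont f)
    (hfeebly : ∀ U : Set Y, IsOpen U → U.Nonempty → (interior (f '' U)).Nonempty) :
    ∀ N : Set Z, IsNowhereDense N → IsNowhereDense (f ⁻¹' N) := by
  intro N hN
  rw [IsNowhereDense, eq_empty_iff_forall_notMem]
  intro x hx
  set U : Set Y := interior (closure (f ⁻¹' N)) with hU
  have hUopen : IsOpen U := isOpen_interior
  have hUne : U.Nonempty := ⟨x, hx⟩
  -- feebly open: f '' U has nonempty interior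
  obtain ⟨z₀, hz₀⟩ := hfeebly U hUopen hUne
  set W₀ : Set Z := interior (f '' U) with hW₀
  -- shrink to avoid closure N
  have hWne : (W₀ \ closure N).Nonempty := by
    by_contra h
    rw [not_nonempty_iff_eq_empty, diff_eq_empty] at h
    have : W₀ ⊆ interior (closure N) :=
      interior_maximal h isOpen_interior
    have := this hz₀
    rw [hN] at this
    exact this
  obtain ⟨z, hzW₀, hzN⟩ := hWne
  have hzU : z ∈ f '' U := interior_subset hzW₀
  obtain ⟨y, hyU, rfl⟩ := hzU
  have hWopen : IsOpen (W₀ \ closure N) := isOpen_interior.sdiff isClosed_closure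
  obtain ⟨V, hVopen, hVne, hVU, hfV⟩ :=
    hqc y (W₀ \ closure N) hWopen ⟨hzW₀, hzN⟩ U hUopen hyU
  -- V is open, nonempty, ⊆ closure (f⁻¹ N), yet disjoint from f⁻¹ N
  obtain ⟨v, hv⟩ := hVne
  have hvCl : v ∈ closure (f ⁻¹' N) := interior_subset (hVU hv)
  obtain ⟨w, hwV, hwN⟩ :=
    (mem_closure_iff.mp hvCl) V hVopen hv
  exact (hfV ⟨w, hwV, rfl⟩).2 (subset_closure hwN)
end

section
/- Let (X,f) be a dynamical system such that fⁿ is quasi-continuous for all n ∈ ℕ, where X is a perfect Hausdorff space. If for every pair of nonempty open sets U, V ⊆ X there exists n ∈ ℤ with fⁿ(U) ∩ V ≠ ∅ (property TT), then for every nonempty open set U ⊆ X, the set N₊(U,U) = {n ∈ ℕ : fⁿ(U) ∩ U ≠ ∅} is infinite. -/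
open Set Function Topology

lemma two_pts_aux {X : Type*} [TopologicalSpace X] (hperf : PerfectPhase X)
    {V : Set X} (hV : IsOpen V) (hVne : V.Nonempty) (y : X) : ∃ z ∈ V, z ≠ y := by
  by_contra h
  push_neg at h
  have hVy : V = {y} := Set.eq_singleton_iff_nonempty_unique_mem.2 ⟨hVne, h⟩
  exact hperf y (hVy ▸ hV)

lemma step_aux {X : Type*} [TopologicalSpace X] [T2Space X] {f : X → X}
    (hperf : PerfectPhase X) (hqc : ∀ n : ℕ, QuasiCont (f^[n])) (m : ℕ)
    {V₁ V₂ : Set X} (h1 : IsOpen V₁) (h1n : V₁.Nonempty) (h2 : IsOpen V₂) (h2n : V₂.Nonempty) :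
    ∃ W₁ W₂ : Set X, IsOpen W₁ ∧ W₁.Nonempty ∧ W₁ ⊆ V₁ ∧ IsOpen W₂ ∧ W₂.Nonempty ∧ W₂ ⊆ V₂ ∧
      (f^[m] '' W₁ ∩ W₂) = ∅ := by
  obtain ⟨x, hx⟩ := h1n
  obtain ⟨z, hz, hzy⟩ := two_pts_aux hperf h2 h2n (f^[m] x)
  obtain ⟨A, B, hA, hB, hyA, hzB, hAB⟩ := t2_separation hzy.symm
  obtain ⟨W₁, hW₁o, hW₁n, hW₁sub, hW₁img⟩ := hqc m x A hA hyA V₁ h1 hx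
  refine ⟨W₁, V₂ ∩ B, hW₁o, hW₁n, hW₁sub, h2.inter hB, ⟨z, hz, hzB⟩, inter_subset_left, ?_⟩
  apply Set.eq_empty_of_forall_notMem
  rintro w ⟨hw1, hw2, hwB⟩
  exact Set.disjoint_left.1 hAB (hW₁img hw1) hwB

lemma chain_aux {X : Type*} [TopologicalSpace X] [T2Space X] {f : X → X}
    (hperf : PerfectPhase X) (hqc : ∀ n : ℕ, QuasiCont (f^[n])) (k : ℕ)
    {U : Set X} (hU : IsOpen U) (hUne : U.Nonempty) :
    ∃ V₁ V₂ : Set X, IsOpen V₁ ∧ V₁.Nonempty ∧ V₁ ⊆ U ∧ IsOpen V₂ ∧ V₂.Nonempty ∧ V₂ ⊆ U ∧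
      ∀ i < k, (f^[i] '' V₁ ∩ V₂) = ∅ ∧ (f^[i] '' V₂ ∩ V₁) = ∅ := by
  induction k with
  | zero =>
    exact ⟨U, U, hU, hUne, subset_rfl, hU, hUne, subset_rfl, fun i hi => absurd hi (by omega)⟩
  | succ k ih =>
    obtain ⟨V₁, V₂, hV₁, hV₁n, hV₁U, hV₂, hV₂n, hV₂U, hprop⟩ := ih
    obtain ⟨W₁, W₂, hW₁, hW₁n, hW₁s, hW₂, hW₂n, hW₂s, hdisj⟩ :=
      step_aux hperf hqc k hV₁ hV₁n hV₂ hV₂n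
    obtain ⟨W₂', W₁', hW₂', hW₂'n, hW₂'s, hW₁', hW₁'n, hW₁'s, hdisj'⟩ :=
      step_aux hperf hqc k hW₂ hW₂n hW₁ hW₁n
    refine ⟨W₁', W₂', hW₁', hW₁'n, fun a ha => hV₁U (hW₁s (hW₁'s ha)),
      hW₂', hW₂'n, fun a ha => hV₂U (hW₂s (hW₂'s ha)), ?_⟩
    intro i hi
    rcases Nat.lt_succ_iff_lt_or_eq.1 hi with hik | rfl
    · obtain ⟨he1, he2⟩ := hprop i hik
      constructor
      · apply Set.eq_empty_of_forall_notMem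
        rintro w ⟨hw1, hw2⟩
        have hmem : w ∈ f^[i] '' V₁ ∩ V₂ :=
          ⟨Set.image_mono (fun a ha => hW₁s (hW₁'s ha)) hw1, hW₂s (hW₂'s hw2)⟩
        rw [he1] at hmem
        exact hmem
      · apply Set.eq_empty_of_forall_notMem
        rintro w ⟨hw1, hw2⟩
        have hmem : w ∈ f^[i] '' V₂ ∩ V₁ :=
          ⟨Set.image_mono (fun a ha => hW₂s (hW₂'s ha)) hw1, hW₁s (hW₁'s hw2)⟩
        rw [he2] at hmem
        exact hmem
    · constructor
      · apply Set.eq_empty_of_forall_notMem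
        rintro w ⟨hw1, hw2⟩
        have hmem : w ∈ f^[i] '' W₁ ∩ W₂ :=
          ⟨Set.image_mono hW₁'s hw1, hW₂'s hw2⟩
        rw [hdisj] at hmem
        exact hmem
      · apply Set.eq_empty_of_forall_notMem
        rintro w ⟨hw1, hw2⟩
        have hmem : w ∈ f^[i] '' W₂' ∩ W₁' := ⟨hw1, hw2⟩
        rw [hdisj'] at hmem
        exact hmem

theorem NplusUU_infinite {X : Type*} [TopologicalSpace X] [T2Space X]
    (f : X → X) (hperf : PerfectPhase X)
    (hqc : ∀ n : ℕ, QuasiCont (f^[n]))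
    (hTT : TTprop f) :
    ∀ U : Set X, IsOpen U → U.Nonempty → (Nplus f U U).Infinite := by
  intro U hU hUne
  apply Set.infinite_of_not_bddAbove
  rintro ⟨k, hk⟩
  obtain ⟨V₁, V₂, hV₁, hV₁n, hV₁U, hV₂, hV₂n, hV₂U, hprop⟩ :=
    chain_aux hperf hqc (k + 1) hU hUne
  obtain ⟨n, hn⟩ := hTT V₁ V₂ hV₁ hV₁n hV₂ hV₂n
  have hnk : ¬ n < k + 1 := by
    intro hlt
    obtain ⟨he1, he2⟩ := hprop n hlt
    rcases hn with h | h
    · obtain ⟨w, hw⟩ := h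
      rw [he1] at hw
      exact hw
    · obtain ⟨w, hw⟩ := h
      rw [he2] at hw
      exact hw
  have hmem : n ∈ Nplus f U U := by
    rcases hn with h | h
    · obtain ⟨w, hw1, hw2⟩ := h
      exact ⟨w, Set.image_mono hV₁U hw1, hV₂U hw2⟩
    · obtain ⟨w, hw1, hw2⟩ := h
      exact ⟨w, Set.image_mono hV₂U hw1, hV₁U hw2⟩
  exact hnk (Nat.lt_succ_of_le (hk hmem))
end

section
/- Let (X,f) be a dynamical system with fⁿ quasi-continuous for all n ∈ ℕ, where X is a perfect Hausdorff space. If (X,f) satisfies TT (for every pair of nonempty open sets U, V, N(U,V) = N₊(U,V) ∪ N₊(V,U) is nonempty), then (X,f) satisfies TT₊₊: for every pair of nonempty open sets V, W ⊆ X, the set N₊(V,W) = {n ∈ ℕ : fⁿ(V) ∩ W ≠ ∅} is infinite. -/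
open Set Function Topology

lemma shrink_aux {X : Type*} [TopologicalSpace X] {f : X → X}
    (hqc : ∀ n : ℕ, QuasiCont (f^[n])) {A B : Set X} (hA : IsOpen A)
    (hB : IsOpen B) {n : ℕ} (h : (f^[n] '' A ∩ B).Nonempty) :
    ∃ A' : Set X, IsOpen A' ∧ A'.Nonempty ∧ A' ⊆ A ∧ f^[n] '' A' ⊆ B := by
  obtain ⟨y, ⟨x, hxA, rfl⟩, hyB⟩ := h
  exact hqc n x B hB hyB A hA hxA

lemma split_aux {X : Type*} [TopologicalSpace X] [T2Space X]
    (hperf : PerfectPhase X) {A : Set X} (hA : IsOpen A) (hAne : A.Nonempty) :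
    ∃ A₁ A₂ : Set X, IsOpen A₁ ∧ A₁.Nonempty ∧ IsOpen A₂ ∧ A₂.Nonempty ∧
      A₁ ⊆ A ∧ A₂ ⊆ A ∧ Disjoint A₁ A₂ := by
  obtain ⟨x, hx⟩ := hAne
  have hy : ∃ y ∈ A, y ≠ x := by
    by_contra h
    push_neg at h
    have : A = {x} := Set.eq_singleton_iff_unique_mem.2 ⟨hx, h⟩
    exact hperf x (this ▸ hA)
  obtain ⟨y, hyA, hyx⟩ := hy
  obtain ⟨U, V, hU, hV, hxU, hyV, hUV⟩ := t2_separation hyx.symm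
  exact ⟨A ∩ U, A ∩ V, hA.inter hU, ⟨x, hx, hxU⟩, hA.inter hV, ⟨y, hyA, hyV⟩,
    Set.inter_subset_left, Set.inter_subset_left,
    hUV.mono Set.inter_subset_right Set.inter_subset_right⟩

lemma lemP_aux {X : Type*} [TopologicalSpace X] [T2Space X] {f : X → X}
    (hperf : PerfectPhase X) (hqc : ∀ n : ℕ, QuasiCont (f^[n])) (hTT : TTprop f)
    {A : Set X} (hA : IsOpen A) (hAne : A.Nonempty) :
    ∃ n ≥ 1, ∃ A' : Set X, IsOpen A' ∧ A'.Nonempty ∧ A' ⊆ A ∧ f^[n] '' A' ⊆ A := by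
  obtain ⟨A₁, A₂, hA₁, hA₁n, hA₂, hA₂n, hs₁, hs₂, hdisj⟩ := split_aux hperf hA hAne
  obtain ⟨n, hn⟩ := hTT A₁ A₂ hA₁ hA₁n hA₂ hA₂n
  have key : ∀ B C : Set X, IsOpen B → IsOpen C → B ⊆ A → C ⊆ A → Disjoint B C →
      n ∈ Nplus f B C →
      ∃ n ≥ 1, ∃ A' : Set X, IsOpen A' ∧ A'.Nonempty ∧ A' ⊆ A ∧ f^[n] '' A' ⊆ A := by
    intro B C hB hC hBA hCA hd hmem
    have hn1 : 1 ≤ n := by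
      rcases Nat.eq_zero_or_pos n with rfl | h
      · exfalso
        obtain ⟨z, hz1, hz2⟩ := hmem
        simp only [Function.iterate_zero, Set.image_id] at hz1
        exact hd.ne_of_mem hz1 hz2 rfl
      · exact h
    obtain ⟨A', hA', hA'n, hsub, himg⟩ := shrink_aux hqc hB hC hmem
    exact ⟨n, hn1, A', hA', hA'n, hsub.trans hBA, himg.trans hCA⟩
  rcases hn with hn | hn
  · exact key A₁ A₂ hA₁ hA₂ hs₁ hs₂ hdisj hn
  · exact key A₂ A₁ hA₂ hA₁ hs₂ hs₁ hdisj.symm hn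

lemma lemR_aux {X : Type*} [TopologicalSpace X] [T2Space X] {f : X → X}
    (hperf : PerfectPhase X) (hqc : ∀ n : ℕ, QuasiCont (f^[n])) (hTT : TTprop f)
    (k : ℕ) {A : Set X} (hA : IsOpen A) (hAne : A.Nonempty) :
    ∃ n ≥ k, ∃ A' : Set X, IsOpen A' ∧ A'.Nonempty ∧ A' ⊆ A ∧ f^[n] '' A' ⊆ A := by
  induction k with
  | zero =>
    exact ⟨0, le_refl 0, A, hA, hAne, le_refl A, by simp⟩
  | succ k ih =>
    obtain ⟨n, hnk, A', hA', hA'n, hsub, himg⟩ := ih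
    obtain ⟨m, hm1, A'', hA'', hA''n, hsub', himg'⟩ := lemP_aux hperf hqc hTT hA' hA'n
    refine ⟨n + m, by omega, A'', hA'', hA''n, hsub'.trans hsub, ?_⟩
    have : f^[n + m] '' A'' = f^[n] '' (f^[m] '' A'') := by
      rw [← Set.image_comp, ← Function.iterate_add]
    rw [this]
    exact (Set.image_mono himg').trans himg

theorem TT_implies_TTplusplus {X : Type*} [TopologicalSpace X] [T2Space X]
    (f : X → X) (hperf : PerfectPhase X)
    (hqc : ∀ n : ℕ, QuasiCont (f^[n]))
    (hTT : TTprop f) :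
    ∀ V W : Set X, IsOpen V → V.Nonempty → IsOpen W → W.Nonempty →
      (Nplus f V W).Infinite := by
  intro V W hV hVne hW hWne
  have main : ∀ k : ℕ, ∃ n ∈ Nplus f V W, k ≤ n := by
    intro k
    obtain ⟨n₀, hn₀⟩ := hTT V W hV hVne hW hWne
    rcases hn₀ with hn₀ | hn₀
    · -- n₀ ∈ N₊(V,W)
      obtain ⟨V', hV', hV'n, hVsub, himg⟩ := shrink_aux hqc hV hW hn₀
      obtain ⟨n, hnk, V'', hV'', hV''n, hsub', himg'⟩ := lemR_aux hperf hqc hTT k hV' hV'n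
      obtain ⟨x, hx⟩ := hV''n
      refine ⟨n₀ + n, ⟨f^[n₀ + n] x, ⟨x, hVsub (hsub' hx), rfl⟩, ?_⟩, by omega⟩
      have : f^[n₀ + n] x = f^[n₀] (f^[n] x) := by
        rw [← Function.iterate_add_apply]
      rw [this]
      exact himg ⟨f^[n] x, himg' ⟨x, hx, rfl⟩, rfl⟩
    · -- n₀ ∈ N₊(W,V)
      obtain ⟨W', hW', hW'n, hWsub, himg⟩ := shrink_aux hqc hW hV hn₀
      obtain ⟨m, hmk, W'', hW'', hW''n, hsub', himg'⟩ :=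
        lemR_aux hperf hqc hTT (n₀ + k) hW' hW'n
      obtain ⟨x, hx⟩ := hW''n
      have hyV : f^[n₀] x ∈ V := himg ⟨x, hsub' hx, rfl⟩
      refine ⟨m - n₀, ⟨f^[m] x, ⟨f^[n₀] x, hyV, ?_⟩, hWsub (himg' ⟨x, hx, rfl⟩)⟩, by omega⟩
      rw [← Function.iterate_add_apply]
      congr 1
      omega
  apply Set.infinite_of_not_bddAbove
  rintro ⟨b, hb⟩
  obtain ⟨n, hn, hbn⟩ := main (b + 1)
  have := hb hn
  omega
end

section
/- Let (X,f) be a dynamical system with fⁿ quasi-continuous for all n ∈ ℕ, where X is a Baire space with a countable π-base. If there exists x ∈ X with ω f(x) = X (property DO₊₊), then for every nonempty open U ⊆ X and every k ∈ ℕ, the set ⋃_{n ≥ k} int(f⁻ⁿ(U)) is dense in X. -/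
open Set Function Topology

theorem DOplusplus_implies_dense_union_interiors {X : Type*} [TopologicalSpace X]
    [BaireSpace X] (f : X → X)
    (hpibase : CountablePiBase X)
    (hqc : ∀ n : ℕ, QuasiCont (f^[n]))
    (hDO : ∃ x : X, omegaLimitSet f x = Set.univ) :
    ∀ U : Set X, IsOpen U → U.Nonempty → ∀ k : ℕ,
      Dense (⋃ n : ℕ, ⋃ (_ : n ≥ k), interior (f^[n] ⁻¹' U)) := by
  obtain ⟨x, hx⟩ := hDO
  have hdense : ∀ m : ℕ, ∀ G : Set X, IsOpen G → G.Nonempty → ∃ n ≥ m, f^[n] x ∈ G := by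
    intro m G hG hGne
    have : Dense {y : X | ∃ n ≥ m, f^[n] x = y} := by
      intro y
      have : y ∈ omegaLimitSet f x := hx ▸ mem_univ y
      exact mem_iInter.mp this m
    obtain ⟨y, hyG, n, hn, hny⟩ := this.inter_open_nonempty G hG hGne
    exact ⟨n, hn, hny ▸ hyG⟩
  intro U hU hUne k
  rw [dense_iff_inter_open]
  intro G hG hGne
  obtain ⟨m, -, hm⟩ := hdense 0 G hG hGne
  obtain ⟨n', hn', hn'U⟩ := hdense (m + k) U hU hUne
  set j := n' - m with hj
  have hjk : j ≥ k := by omega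
  have hjm : n' = j + m := by omega
  have hfj : f^[j] (f^[m] x) ∈ U := by
    rw [← Function.iterate_add_apply, ← hjm]; exact hn'U
  obtain ⟨V, hVopen, hVne, hVG, hVU⟩ := hqc j (f^[m] x) U hU hfj G hG hm
  obtain ⟨v, hv⟩ := hVne
  refine ⟨v, hVG hv, mem_iUnion.mpr ⟨j, mem_iUnion.mpr ⟨hjk, ?_⟩⟩⟩
  exact interior_maximal (fun z hz => show f^[j] z ∈ U from hVU (mem_image_of_mem _ hz)) hVopen hv
end

section
/- Let (X,f) be a dynamical system with fⁿ quasi-continuous for all n ∈ ℕ, where X is a Baire space with a countable π-base {Pₙ : n ∈ ℕ}. If for every nonempty open U ⊆ X and every k ∈ ℕ the set ⋃_{n ≥ k} int(f⁻ⁿ(U)) is dense in X, then the set {x ∈ X : ω f(x) = X} contains a dense Gδ-set of X. -/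
open Set Function Topology

theorem dense_union_interiors_implies_residual_omega {X : Type*} [TopologicalSpace X]
    [BaireSpace X] (f : X → X)
    (hpibase : CountablePiBase X)
    (hqc : ∀ n : ℕ, QuasiCont (f^[n]))
    (hdense : ∀ U : Set X, IsOpen U → U.Nonempty → ∀ k : ℕ,
      Dense (⋃ n : ℕ, ⋃ (_ : n ≥ k), interior (f^[n] ⁻¹' U))) :
    ∃ S : Set X, IsGδ S ∧ Dense S ∧ S ⊆ {x : X | omegaLimitSet f x = Set.univ} := by
  obtain ⟨P, hP, hPbase⟩ := hpibase
  refine ⟨⋂ p : ℕ × ℕ, ⋃ n : ℕ, ⋃ (_ : n ≥ p.2), interior (f^[n] ⁻¹' P p.1), ?_, ?_, ?_⟩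
  · exact .iInter fun p => (isOpen_iUnion fun n => isOpen_iUnion fun _ => isOpen_interior).isGδ
  · exact dense_iInter_of_isOpen
      (fun p => isOpen_iUnion fun n => isOpen_iUnion fun _ => isOpen_interior)
      (fun p => hdense (P p.1) (hP p.1).1 (hP p.1).2 p.2)
  · intro x hx
    simp only [mem_setOf_eq, omegaLimitSet]
    refine eq_univ_of_forall fun y => mem_iInter.2 fun k => ?_
    rw [mem_closure_iff]
    intro U hU hyU
    obtain ⟨m, hm⟩ := hPbase U hU ⟨y, hyU⟩
    have := mem_iInter.1 hx (m, k)
    simp only [mem_iUnion] at this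
    obtain ⟨n, hn, hxn⟩ := this
    have hmem : x ∈ f^[n] ⁻¹' P m := interior_subset hxn
    exact ⟨f^[n] x, hm hmem, n, hn, rfl⟩
end

section
/- Let (X,f) be a dynamical system with fⁿ quasi-continuous for all n ∈ ℕ, where X is a second category (non-meagre) space with a countable π-base. If (X,f) is topologically transitive (TT₊: for every pair of nonempty open sets U, V there exists n ∈ ℕ with fⁿ(U) ∩ V ≠ ∅), then there exists a point x ∈ X whose forward orbit {fⁿ(x) : n ∈ ℕ} is dense in X. -/
open Set Function Topology

theorem TTplus_implies_dense_orbit {X : Type*} [TopologicalSpace X] (f : X → X)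
    (hsecond : ¬ IsMeagre (Set.univ : Set X))
    (hpibase : CountablePiBase X)
    (hqc : ∀ n : ℕ, QuasiCont (f^[n]))
    (hTT : TTplus f) :
    ∃ x : X, Dense (Set.range fun n : ℕ => f^[n] x) := by

  obtain ⟨P, hP, hPbase⟩ := hpibase
  -- E n : open dense set of points whose orbit hits P n
  set E : ℕ → Set X := fun n => ⋃ k : ℕ, interior (f^[k] ⁻¹' P n) with hE
  have hEopen : ∀ n, IsOpen (E n) := fun n => isOpen_iUnion fun k => isOpen_interior
  have hEdense : ∀ n, Dense (E n) := by
    intro n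
    rw [dense_iff_inter_open]
    intro U hU ⟨u, hu⟩
    obtain ⟨k, hk⟩ := hTT U (P n) hU ⟨u, hu⟩ (hP n).1 (hP n).2
    obtain ⟨y, ⟨x, hxU, hxy⟩, hyP⟩ := hk
    obtain ⟨V, hVopen, ⟨v, hv⟩, hVU, hVim⟩ :=
      hqc k x (P n) (hP n).1 (by rw [hxy]; exact hyP) U hU hxU
    refine ⟨v, hVU hv, mem_iUnion.2 ⟨k, ?_⟩⟩
    exact interior_maximal (fun z hz => Set.mem_preimage.2 (hVim (Set.mem_image_of_mem _ hz))) hVopen hv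
  -- The intersection is nonempty
  have hres : (⋂ n, E n) ∈ residual X := by
    exact countable_iInter_mem.mpr fun n => residual_of_dense_open (hEopen n) (hEdense n)
  have hne : (⋂ n, E n).Nonempty := by
    by_contra h
    rw [Set.not_nonempty_iff_eq_empty] at h
    apply hsecond
    have : IsMeagre ((⋂ n, E n)ᶜ) := by
      rw [IsMeagre, compl_compl]; exact hres
    refine this.mono ?_
    rw [h, compl_empty]
  obtain ⟨x, hx⟩ := hne
  refine ⟨x, dense_iff_inter_open.2 fun U hU hUne => ?_⟩
  obtain ⟨n, hn⟩ := hPbase U hU hUne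
  have hxn := mem_iInter.1 hx n
  obtain ⟨k, hk⟩ := mem_iUnion.1 hxn
  exact ⟨f^[k] x, hn (Set.mem_preimage.1 (interior_subset hk)), ⟨k, rfl⟩⟩
end

section
/- Let (X,f) be a dynamical system with fⁿ quasi-continuous for all n ∈ ℕ, where X is a Baire space with a countable π-base. If (X,f) is topologically transitive (TT₊), then the set Trans_f of points with dense forward orbit contains a dense Gδ-set of X. -/
open Set Function Topology

theorem TTplus_implies_residual_trans {X : Type*} [TopologicalSpace X] [BaireSpace X]
    (f : X → X)
    (hpibase : CountablePiBase X)
    (hqc : ∀ n : ℕ, QuasiCont (f^[n]))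
    (hTT : TTplus f) :
    ∃ S : Set X, IsGδ S ∧ Dense S ∧
      ∀ x ∈ S, Dense (Set.range fun n : ℕ => f^[n] x) := by

  obtain ⟨P, hP, hPbase⟩ := hpibase
  set D : ℕ → Set X := fun k => ⋃₀ {V | IsOpen V ∧ ∃ n, f^[n] '' V ⊆ P k} with hD
  have hDopen : ∀ k, IsOpen (D k) := fun k =>
    isOpen_sUnion (fun V hV => hV.1)
  have hDdense : ∀ k, Dense (D k) := by
    intro k
    rw [dense_iff_inter_open]
    intro U hU hUne
    obtain ⟨n, y, hy1, hy2⟩ := hTT U (P k) hU hUne (hP k).1 (hP k).2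
    obtain ⟨x', hx'U, rfl⟩ := hy1
    obtain ⟨V, hVopen, hVne, hVU, hVW⟩ :=
      hqc n x' (P k) (hP k).1 hy2 U hU hx'U
    obtain ⟨y, hy⟩ := hVne
    exact ⟨y, mem_inter (hVU hy) ⟨V, ⟨hVopen, n, hVW⟩, hy⟩⟩
  refine ⟨⋂ k, D k, .iInter_of_isOpen hDopen, dense_iInter_of_isOpen hDopen hDdense, ?_⟩
  intro x hx
  rw [dense_iff_inter_open]
  intro U hU hUne
  obtain ⟨k, hk⟩ := hPbase U hU hUne
  have hxk : x ∈ D k := mem_iInter.mp hx k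
  obtain ⟨V, ⟨hVopen, n, hVW⟩, hxV⟩ := hxk
  exact ⟨f^[n] x, mem_inter (hk (hVW ⟨x, hxV, rfl⟩)) ⟨n, rfl⟩⟩
end

section
/- Let (X,f) be a dynamical system on a perfect Hausdorff Baire space X with a countable π-base, where fⁿ is quasi-continuous for all n ∈ ℕ. Then the following are equivalent: (a) for every pair of nonempty open sets U, V the set N(U,V) is nonempty (TT); (b) for every pair of nonempty open sets U, V the set N₊(U,V) is infinite (TT₊₊); (c) there exists a point with dense forward orbit (DO₊); (d) there exists a point x with ω f(x) = X (DO₊₊). -/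
open Set Function Topology

/-- Any nonempty open set in a perfect T2 space contains two disjoint nonempty open subsets. -/
lemma exists_disjoint_opens {X : Type*} [TopologicalSpace X] [T2Space X]
    (hperf : PerfectPhase X) {W : Set X} (hW : IsOpen W) (hWne : W.Nonempty) :
    ∃ A B : Set X, IsOpen A ∧ A.Nonempty ∧ A ⊆ W ∧ IsOpen B ∧ B.Nonempty ∧ B ⊆ W ∧
      Disjoint A B := by
  obtain ⟨x, hx⟩ := hWne
  have hy : ∃ y ∈ W, y ≠ x := by
    by_contra h
    push_neg at h
    have : W = {x} := Set.eq_singleton_iff_unique_mem.mpr ⟨hx, h⟩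
    exact hperf x (this ▸ hW)
  obtain ⟨y, hy, hyx⟩ := hy
  obtain ⟨U, V, hU, hV, hxU, hyV, hUV⟩ := t2_separation hyx.symm
  exact ⟨W ∩ U, W ∩ V, hW.inter hU, ⟨x, hx, hxU⟩, inter_subset_left,
    hW.inter hV, ⟨y, hy, hyV⟩, inter_subset_left,
    hUV.mono inter_subset_right inter_subset_right⟩

/-- Under TT, every nonempty open set admits returns with arbitrarily large times,
on a nonempty open subset. -/
lemma return_large {X : Type*} [TopologicalSpace X] [T2Space X]
    (f : X → X) (hperf : PerfectPhase X) (hqc : ∀ n : ℕ, QuasiCont (f^[n]))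
    (htt : TTprop f) :
    ∀ N : ℕ, ∀ W : Set X, IsOpen W → W.Nonempty →
      ∃ m ≥ N, ∃ V : Set X, IsOpen V ∧ V.Nonempty ∧ V ⊆ W ∧ f^[m] '' V ⊆ W := by
  intro N
  induction N with
  | zero =>
    intro W hW hWne
    exact ⟨0, le_rfl, W, hW, hWne, subset_rfl, by simp⟩
  | succ N ih =>
    intro W hW hWne
    obtain ⟨m, hm, V, hV, hVne, hVW, himg⟩ := ih W hW hWne
    obtain ⟨A, B, hA, hAne, hAV, hB, hBne, hBV, hAB⟩ := exists_disjoint_opens hperf hV hVne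
    obtain ⟨k, hk⟩ := htt A B hA hAne hB hBne
    have key : 1 ≤ k ∧ ∃ z, z ∈ V ∧ f^[k] z ∈ V := by
      rcases hk with h | h
      · obtain ⟨w, ⟨z, hz, rfl⟩, hw⟩ := h
        refine ⟨?_, z, hAV hz, hBV hw⟩
        rcases Nat.eq_zero_or_pos k with rfl | h1
        · simp only [Function.iterate_zero_apply] at hw
          exact ((Set.disjoint_left.mp hAB hz hw)).elim
        · exact h1
      · obtain ⟨w, ⟨z, hz, rfl⟩, hw⟩ := h
        refine ⟨?_, z, hBV hz, hAV hw⟩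
        rcases Nat.eq_zero_or_pos k with rfl | h1
        · simp only [Function.iterate_zero_apply] at hw
          exact ((Set.disjoint_left.mp hAB hw hz)).elim
        · exact h1
    obtain ⟨hk1, z, hzV, hfzV⟩ := key
    obtain ⟨V₂, hV₂, hV₂ne, hV₂V, himg₂⟩ := hqc k z V hV hfzV V hV hzV
    refine ⟨m + k, by omega, V₂, hV₂, hV₂ne, hV₂V.trans hVW, ?_⟩
    intro w hw
    obtain ⟨a, ha, rfl⟩ := hw
    rw [Function.iterate_add_apply]
    exact himg ⟨f^[k] a, himg₂ ⟨a, ha, rfl⟩, rfl⟩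

/-- TT implies a "forward" transitivity with an open witness set. -/
lemma tt_forward {X : Type*} [TopologicalSpace X] [T2Space X]
    (f : X → X) (hperf : PerfectPhase X) (hqc : ∀ n : ℕ, QuasiCont (f^[n]))
    (htt : TTprop f) :
    ∀ U V : Set X, IsOpen U → U.Nonempty → IsOpen V → V.Nonempty →
      ∃ n : ℕ, ∃ V' : Set X, IsOpen V' ∧ V'.Nonempty ∧ V' ⊆ U ∧ f^[n] '' V' ⊆ V := by
  intro U V hU hUne hV hVne
  obtain ⟨k, hk⟩ := htt U V hU hUne hV hVne
  rcases hk with h | h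
  · obtain ⟨w, ⟨x, hx, rfl⟩, hw⟩ := h
    obtain ⟨V', h1, h2, h3, h4⟩ := hqc k x V hV hw U hU hx
    exact ⟨k, V', h1, h2, h3, h4⟩
  · obtain ⟨w, ⟨y, hy, rfl⟩, hw⟩ := h
    obtain ⟨W, hWo, hWne, hWV, hWU⟩ := hqc k y U hU hw V hV hy
    obtain ⟨m, hm, V₁, hV₁, hV₁ne, hV₁W, himg⟩ :=
      return_large f hperf hqc htt (k + 1) W hWo hWne
    obtain ⟨a, ha⟩ := hV₁ne
    have hu : f^[k] a ∈ U := hWU ⟨a, hV₁W ha, rfl⟩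
    have hmem : f^[m - k] (f^[k] a) ∈ V := by
      have heq : f^[m - k] (f^[k] a) = f^[m] a := by
        rw [← Function.iterate_add_apply]
        congr 1
        omega
      rw [heq]
      exact hWV (himg ⟨a, ha, rfl⟩)
    obtain ⟨V', h1, h2, h3, h4⟩ := hqc (m - k) (f^[k] a) V hV hmem U hU hu
    exact ⟨m - k, V', h1, h2, h3, h4⟩

theorem equivalence_theorem {X : Type*} [TopologicalSpace X] [T2Space X] [BaireSpace X]
    (f : X → X) (hperf : PerfectPhase X)
    (hpibase : CountablePiBase X)
    (hqc : ∀ n : ℕ, QuasiCont (f^[n])) :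
    [ TTprop f,
      (∀ U V : Set X, IsOpen U → U.Nonempty → IsOpen V → V.Nonempty →
        (Nplus f U V).Infinite),
      (∃ x : X, Dense (Set.range fun n : ℕ => f^[n] x)),
      (∃ x : X, omegaLimitSet f x = Set.univ) ].TFAE := by
  obtain ⟨P, hP, hPbase⟩ := hpibase
  haveI hpunct : ∀ y : X, (𝓝[≠] y).NeBot := by
    intro y
    rw [Filter.neBot_iff]
    intro h
    exact hperf y ((isOpen_singleton_iff_punctured_nhds y).mpr h)
  tfae_have 1 → 2 := by
    intro h1 U V hU hUne hV hVne
    by_contra hfin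
    rw [Set.not_infinite] at hfin
    obtain ⟨b, hb⟩ := hfin.bddAbove
    obtain ⟨n, V', hV'o, hV'ne, hV'U, himg⟩ := tt_forward f hperf hqc h1 U V hU hUne hV hVne
    obtain ⟨m, hm, V₂, hV₂o, hV₂ne, hV₂V', himg₂⟩ :=
      return_large f hperf hqc h1 (b + 1) V' hV'o hV'ne
    obtain ⟨a, ha⟩ := hV₂ne
    have hmem : n + m ∈ Nplus f U V := by
      refine ⟨f^[n + m] a, ⟨a, hV'U (hV₂V' ha), rfl⟩, ?_⟩
      rw [Function.iterate_add_apply]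
      exact himg ⟨f^[m] a, himg₂ ⟨a, ha, rfl⟩, rfl⟩
    have := hb hmem
    omega
  tfae_have 2 → 1 := by
    intro h2 U V hU hUne hV hVne
    obtain ⟨n, hn⟩ := (h2 U V hU hUne hV hVne).nonempty
    exact ⟨n, Or.inl hn⟩
  tfae_have 1 → 3 := by
    intro h1
    have hXne : Nonempty X := ⟨(hP 0).2.choose⟩
    set O : ℕ → Set X := fun k => ⋃ m : ℕ, interior (f^[m] ⁻¹' P k) with hO
    have hOopen : ∀ k, IsOpen (O k) := fun k => isOpen_iUnion fun _ => isOpen_interior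
    have hOdense : ∀ k, Dense (O k) := by
      intro k
      rw [dense_iff_inter_open]
      intro U hU hUne
      obtain ⟨n, V', hV'o, hV'ne, hV'U, himg⟩ :=
        tt_forward f hperf hqc h1 U (P k) hU hUne (hP k).1 (hP k).2
      obtain ⟨a, ha⟩ := hV'ne
      refine ⟨a, hV'U ha, mem_iUnion.mpr ⟨n, ?_⟩⟩
      exact interior_maximal (Set.image_subset_iff.mp himg) hV'o ha
    have hdense : Dense (⋂ k, O k) := dense_iInter_of_isOpen hOopen hOdense
    obtain ⟨x, hx⟩ := hdense.nonempty
    refine ⟨x, ?_⟩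
    rw [dense_iff_inter_open]
    intro W hW hWne
    obtain ⟨k, hk⟩ := hPbase W hW hWne
    have hxk : x ∈ O k := mem_iInter.mp hx k
    obtain ⟨m, hm⟩ := mem_iUnion.mp hxk
    have hxm : x ∈ f^[m] ⁻¹' P k := interior_subset hm
    exact ⟨f^[m] x, hk hxm, ⟨m, rfl⟩⟩
  tfae_have 3 → 4 := by
    rintro ⟨x, hx⟩
    have htail : ∀ k : ℕ, Dense {y : X | ∃ n ≥ k, f^[n] x = y} := by
      intro k
      induction k with
      | zero =>
        refine hx.mono ?_
        rintro y ⟨n, rfl⟩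
        exact ⟨n, Nat.zero_le n, rfl⟩
      | succ k ih =>
        refine ((ih.diff_singleton (f^[k] x)).mono ?_)
        rintro y ⟨⟨n, hn, rfl⟩, hy⟩
        refine ⟨n, ?_, rfl⟩
        rcases Nat.lt_or_ge n (k + 1) with h | h
        · exfalso
          have hnk : n = k := by omega
          subst hnk
          exact hy (Set.mem_singleton _)
        · exact h
    refine ⟨x, Set.eq_univ_iff_forall.mpr fun y => mem_iInter.mpr fun k => (htail k) y⟩
  tfae_have 4 → 1 := by
    rintro ⟨x, hx⟩ U V hU hUne hV hVne
    have htail : ∀ k : ℕ, Dense {y : X | ∃ n ≥ k, f^[n] x = y} := by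
      intro k y
      have : y ∈ omegaLimitSet f x := hx ▸ Set.mem_univ y
      exact mem_iInter.mp this k
    obtain ⟨z, hzU, i, -, rfl⟩ := (htail 0).inter_open_nonempty U hU hUne
    obtain ⟨w, hwV, j, hji, rfl⟩ := (htail i).inter_open_nonempty V hV hVne
    refine ⟨j - i, Or.inl ⟨f^[j] x, ⟨f^[i] x, hzU, ?_⟩, hwV⟩⟩
    rw [← Function.iterate_add_apply]
    congr 1
    omega
  tfae_finish
end

section
/- Let (X,f) be a dynamical system where f is quasi-continuous and δ-open, and X is fragmented by a metric ρ whose topology contains that of X. Then C^∞_f = {x ∈ X : fⁿ(x) ∈ C(f) for all n ∈ ℕ} is a residual subset of X, where C(f) is the set of continuity points of f. -/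
open Set Function Topology

lemma nwd_of_closed_int_empty {X : Type*} [TopologicalSpace X] {s : Set X}
    (h : IsClosed s) (h2 : interior s = ∅) : IsNowhereDense s := by
  rw [IsNowhereDense, h.closure_eq]; exact h2

lemma nwd_isMeagre {X : Type*} [TopologicalSpace X] {s : Set X}
    (h : IsNowhereDense s) : IsMeagre s := by
  rw [isMeagre_iff_countable_union_isNowhereDense]
  exact ⟨{s}, by simpa using h, Set.countable_singleton s, by simp⟩

lemma ball_subset_of_open {X : Type*} [m : MetricSpace X] {W : Set X} (h : IsOpen W)
    {y : X} (hy : y ∈ W) : ∃ ε > 0, ∀ z, dist z y < ε → z ∈ W := by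
  rw [Metric.isOpen_iff] at h
  obtain ⟨ε, hε, hb⟩ := h y hy
  exact ⟨ε, hε, fun z hz => hb hz⟩

theorem Cinftyf_residual {X : Type*} [t : TopologicalSpace X] (f : X → X)
    (m : MetricSpace X)
    (hfiner : ∀ U : Set X, IsOpen[t] U → IsOpen[m.toUniformSpace.toTopologicalSpace] U)
    (hfrag : ∀ ε > (0 : ℝ), ∀ A : Set X, A.Nonempty →
      ∃ B : Set X, B.Nonempty ∧ (∃ O : Set X, IsOpen[t] O ∧ B = A ∩ O) ∧
        ∀ x ∈ B, ∀ y ∈ B, m.dist x y < ε)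
    (hqc : QuasiCont f)
    (hdelta : ∀ N : Set X, IsNowhereDense N → IsNowhereDense (f ⁻¹' N)) :
    IsMeagre {x : X | ∀ n : ℕ, ContinuousAt f (f^[n] x)}ᶜ := by

  classical
  -- oscillation sets
  set E : ℝ → Set X := fun ε =>
    {x | ∀ U : Set X, IsOpen U → x ∈ U → ∃ y ∈ U, ∃ z ∈ U, ε ≤ m.dist (f y) (f z)} with hE
  -- each E ε (ε > 0) is nowhere dense
  have hEnwd : ∀ ε : ℝ, 0 < ε → IsNowhereDense (E ε) := by
    intro ε hε
    apply nwd_of_closed_int_empty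
    · rw [← isOpen_compl_iff, isOpen_iff_mem_nhds]
      intro x hx
      simp only [E, mem_compl_iff, mem_setOf_eq, not_forall] at hx
      obtain ⟨U, hU, hxU, hno⟩ := hx
      push_neg at hno
      refine Filter.mem_of_superset (hU.mem_nhds hxU) ?_
      intro x' hx' hx'E
      obtain ⟨y, hy, z, hz, hd⟩ := hx'E U hU hx'
      exact absurd hd (not_le.mpr (hno y hy z hz))
    · by_contra hne
      obtain ⟨x, hx⟩ := Set.nonempty_iff_ne_empty.mpr hne
      have hUo : IsOpen (interior (E ε)) := isOpen_interior
      have hfim : (f '' interior (E ε)).Nonempty := ⟨f x, mem_image_of_mem f hx⟩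
      obtain ⟨B, ⟨b, hb⟩, ⟨O, hO, hBO⟩, hdiam⟩ := hfrag ε hε _ hfim
      rw [hBO] at hb
      obtain ⟨⟨x₀, hx₀, hfx₀⟩, hbO⟩ := hb
      obtain ⟨V, hV, ⟨v, hv⟩, hVU, hfV⟩ :=
        hqc x₀ O hO (hfx₀ ▸ hbO) _ hUo hx₀
      have hvE : v ∈ E ε := interior_subset (hVU hv)
      obtain ⟨y, hy, z, hz, hd⟩ := hvE V hV hv
      have hyB : f y ∈ B := hBO ▸ ⟨mem_image_of_mem f (hVU hy), hfV (mem_image_of_mem f hy)⟩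
      have hzB : f z ∈ B := hBO ▸ ⟨mem_image_of_mem f (hVU hz), hfV (mem_image_of_mem f hz)⟩
      exact absurd hd (not_le.mpr (hdiam _ hyB _ hzB))
  -- preimages of nowhere dense sets under iterates are nowhere dense
  have hiter : ∀ (n : ℕ) (N : Set X), IsNowhereDense N → IsNowhereDense (f^[n] ⁻¹' N) := by
    intro n
    induction n with
    | zero => intro N hN; simpa using hN
    | succ n ih =>
      intro N hN
      rw [Function.iterate_succ', Set.preimage_comp]
      exact ih _ (hdelta N hN)
  -- discontinuity points are covered by the oscillation sets
  have hcover : {x : X | ∀ n : ℕ, ContinuousAt f (f^[n] x)}ᶜ ⊆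
      ⋃ (n : ℕ), ⋃ (k : ℕ), f^[n] ⁻¹' (E (1 / (k + 1))) := by
    intro x hx
    simp only [mem_compl_iff, mem_setOf_eq, not_forall] at hx
    obtain ⟨n, hn⟩ := hx
    simp only [mem_iUnion]
    refine ⟨n, ?_⟩
    by_contra hk
    push_neg at hk
    apply hn
    -- show continuity at p := f^[n] x
    set p := f^[n] x
    rw [ContinuousAt, Filter.tendsto_def]
    intro s hs
    rw [mem_nhds_iff] at hs
    obtain ⟨W, hWs, hW, hpW⟩ := hs
    have hW' : IsOpen[m.toUniformSpace.toTopologicalSpace] W := hfiner W hW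
    obtain ⟨ε, hε, hball⟩ := @ball_subset_of_open X m W hW' (f p) hpW
    obtain ⟨k, hk'⟩ := exists_nat_gt (1 / ε)
    have hkpos : (0:ℝ) < 1 / ((k:ℝ) + 1) := by positivity
    have hklt : 1 / ((k:ℝ) + 1) < ε := by
      rw [div_lt_iff₀ (by positivity)]
      rw [div_lt_iff₀ hε] at hk'
      nlinarith
    have hpE : p ∉ E (1 / (k + 1)) := hk k
    simp only [E, mem_setOf_eq, not_forall] at hpE
    obtain ⟨U, hU, hpU, hno⟩ := hpE
    push_neg at hno
    refine Filter.mem_of_superset (hU.mem_nhds hpU) fun y hy => hWs ?_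
    apply hball
    calc m.dist (f y) (f p) < 1 / ((k:ℝ) + 1) := hno y hy p hpU
      _ < ε := hklt
  refine IsMeagre.mono hcover ?_
  refine isMeagre_iUnion fun n => isMeagre_iUnion fun k => ?_
  exact nwd_isMeagre (hiter n _ (hEnwd _ (by positivity)))
end

section
/- Let (X,f) be a dynamical system on a Hausdorff space X with fⁿ quasi-continuous for all n ∈ ℕ, satisfying TT. If x is an isolated point of X with |f⁻¹(x)| > 1, then x is a periodic point of f, |f⁻¹(x)| = 2, and f⁻¹(x) consists entirely of isolated points. -/
open Set Function Topology

lemma aux_cl_int {X : Type*} [TopologicalSpace X] (f : X → X) (hqc : QuasiCont f)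
    (x : X) (hx : IsOpen ({x} : Set X)) :
    ∀ y ∈ f ⁻¹' {x}, y ∈ closure (interior (f ⁻¹' {x})) := by
  intro y hy
  rw [mem_closure_iff]
  intro U hU hyU
  obtain ⟨V, hVo, hVne, hVU, hVim⟩ := hqc y {x} hx hy U hU hyU
  obtain ⟨v, hv⟩ := hVne
  have hVA : V ⊆ f ⁻¹' {x} := fun w hw => hVim ⟨w, hw, rfl⟩
  exact ⟨v, hVU hv, (hVo.subset_interior_iff.mpr hVA) hv⟩

lemma aux_key {X : Type*} [TopologicalSpace X] (f : X → X) (hTT : TTprop f) (x : X)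
    (W₁ W₂ : Set X) (h1 : IsOpen W₁) (h2 : IsOpen W₂) (hd : Disjoint W₁ W₂)
    (ne1 : (W₁ ∩ interior (f ⁻¹' {x})).Nonempty)
    (ne2 : (W₂ ∩ interior (f ⁻¹' {x})).Nonempty) :
    ∃ m : ℕ, f^[m+1] x = x ∧ f^[m] x ∈ W₁ ∪ W₂ := by
  set A := f ⁻¹' {x} with hA
  have main : ∀ V V' : Set X, V ⊆ A → V' ⊆ A → V' ⊆ W₁ ∪ W₂ → Disjoint V V' →
      ∀ n ∈ Nplus f V V', ∃ m : ℕ, f^[m+1] x = x ∧ f^[m] x ∈ W₁ ∪ W₂ := by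
    intro V V' hVA hV'A hV'W hdis n hn
    obtain ⟨p, ⟨v, hv, rfl⟩, hp'⟩ := hn
    match n with
    | 0 => exact absurd rfl (hdis.ne_of_mem hv hp')
    | m+1 =>
      have hfv : f v = x := hVA hv
      have h1 : f^[m+1] v = f^[m] x := by rw [iterate_succ_apply, hfv]
      have h2 : f (f^[m+1] v) = x := hV'A hp'
      refine ⟨m, ?_, ?_⟩
      · calc f^[m+1] x = f (f^[m] x) := Function.iterate_succ_apply' f m x
          _ = f (f^[m+1] v) := by rw [h1]
          _ = x := h2
      · rw [← h1]; exact hV'W hp'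
  have hV1o : IsOpen (W₁ ∩ interior A) := h1.inter isOpen_interior
  have hV2o : IsOpen (W₂ ∩ interior A) := h2.inter isOpen_interior
  have hsub : ∀ W : Set X, W ∩ interior A ⊆ A :=
    fun W y hy => interior_subset hy.2
  obtain ⟨n, hn⟩ := hTT _ _ hV1o ne1 hV2o ne2
  have hdis : Disjoint (W₁ ∩ interior A) (W₂ ∩ interior A) :=
    hd.mono inter_subset_left inter_subset_left
  rcases hn with hn | hn
  · exact main _ _ (hsub W₁) (hsub W₂)
      (fun y hy => Or.inr hy.1) hdis n hn
  · exact main _ _ (hsub W₂) (hsub W₁)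
      (fun y hy => Or.inl hy.1) hdis.symm n hn


theorem isolated_point_large_preimage {X : Type*} [TopologicalSpace X] [T2Space X]
    (f : X → X)
    (hqc : ∀ n : ℕ, QuasiCont (f^[n]))
    (hTT : TTprop f)
    (x : X) (hx : IsOpen ({x} : Set X))
    (hcard : (f ⁻¹' {x}).Nontrivial) :
    (∃ k : ℕ, 0 < k ∧ f^[k] x = x) ∧
      (f ⁻¹' {x}).ncard = 2 ∧
      ∀ y ∈ f ⁻¹' {x}, IsOpen ({y} : Set X) := by
  set A := f ⁻¹' {x} with hA
  have hqc1 : QuasiCont f := by have := hqc 1; rwa [Function.iterate_one] at this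
  have hcl : ∀ y ∈ A, y ∈ closure (interior A) := aux_cl_int f hqc1 x hx
  -- nonempty intersection of nbhds of points of A with interior A
  have hne : ∀ y ∈ A, ∀ W : Set X, IsOpen W → y ∈ W → (W ∩ interior A).Nonempty := by
    intro y hy W hW hyW
    exact mem_closure_iff.mp (hcl y hy) W hW hyW
  obtain ⟨a, ha, b, hb, hab⟩ := hcard
  -- Step 1: periodicity
  have hex : ∃ k : ℕ, 0 < k ∧ f^[k] x = x := by
    obtain ⟨W₁, W₂, h1, h2, ha', hb', hd⟩ := t2_separation hab
    obtain ⟨m, hm, -⟩ := aux_key f hTT x W₁ W₂ h1 h2 hd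
      (hne a ha W₁ h1 ha') (hne b hb W₂ h2 hb')
    exact ⟨m+1, m.succ_pos, hm⟩
  classical
  obtain ⟨k, hkpos, hkper, hkmin⟩ :
      ∃ k : ℕ, 0 < k ∧ f^[k] x = x ∧ ∀ j, 0 < j → f^[j] x = x → k ≤ j :=
    ⟨Nat.find hex, (Nat.find_spec hex).1, (Nat.find_spec hex).2,
      fun j h1 h2 => Nat.find_le ⟨h1, h2⟩⟩
  have hper : IsPeriodicPt f k x := hkper
  -- orbit
  set O : Set X := (fun j => f^[j] x) '' (Set.Iio k) with hO
  have hOfin : O.Finite := (Set.finite_Iio k).image _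
  have hOcl : IsClosed O := hOfin.isClosed
  have horb : ∀ n : ℕ, f^[n] x ∈ O := by
    intro n
    exact ⟨n % k, Nat.mod_lt n hkpos, hper.iterate_mod_apply n⟩
  set z := f^[k-1] x with hz
  have hzO : z ∈ O := ⟨k-1, Nat.sub_lt hkpos one_pos, rfl⟩
  have hsucc : f^[k-1+1] x = x := by
    rwa [Nat.sub_add_cancel hkpos]
  have hzA : z ∈ A := by
    show f z ∈ ({x} : Set X)
    have h' : f (f^[k-1] x) = f^[k-1+1] x := (Function.iterate_succ_apply' f (k-1) x).symm
    rw [hz, h', hsucc]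
    rfl
  have hAO : ∀ p ∈ A, p ∈ O → p = z := by
    rintro p hp ⟨j, hj, rfl⟩
    have hjk : j < k := hj
    have hfp : f^[j+1] x = x := by
      rw [Function.iterate_succ_apply']; exact hp
    have hle : k ≤ j + 1 := hkmin _ (j.succ_pos) hfp
    have hjeq : j = k - 1 := by omega
    rw [hjeq]
  -- uniqueness outside the orbit
  have huniq : ∀ y₁ ∈ A, y₁ ∉ O → ∀ y₂ ∈ A, y₂ ∉ O → y₁ = y₂ := by
    intro y₁ h1A h1O y₂ h2A h2O
    by_contra hne12
    obtain ⟨W₁, W₂, hW1, hW2, hy1, hy2, hd⟩ := t2_separation hne12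
    have hW1' : IsOpen (W₁ \ O) := hW1.sdiff hOcl
    have hW2' : IsOpen (W₂ \ O) := hW2.sdiff hOcl
    have hd' : Disjoint (W₁ \ O) (W₂ \ O) := hd.mono diff_subset diff_subset
    obtain ⟨m, -, hmem⟩ := aux_key f hTT x _ _ hW1' hW2' hd'
      (hne y₁ h1A _ hW1' ⟨hy1, h1O⟩) (hne y₂ h2A _ hW2' ⟨hy2, h2O⟩)
    rcases hmem with hm | hm
    · exact hm.2 (horb m)
    · exact hm.2 (horb m)
  -- get y ∈ A \ O
  have hyex : ∃ y ∈ A, y ∉ O := by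
    by_contra h
    push_neg at h
    have : a = z := hAO a ha (h a ha)
    have hb' : b = z := hAO b hb (h b hb)
    exact hab (this.trans hb'.symm)
  obtain ⟨y, hyA, hyO⟩ := hyex
  have hyz : y ≠ z := fun h => hyO (h ▸ hzO)
  have hAeq : A = {z, y} := by
    ext p
    constructor
    · intro hp
      by_cases hpO : p ∈ O
      · exact Or.inl (hAO p hp hpO)
      · exact Or.inr (huniq p hp hpO y hyA hyO)
    · rintro (rfl | rfl); exacts [hzA, hyA]
  refine ⟨⟨k, hkpos, hkper⟩, ?_, ?_⟩
  · rw [hAeq]; exact Set.ncard_pair (Ne.symm hyz)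
  · -- isolation
    have hintsub : interior A ⊆ ({z, y} : Set X) := hAeq ▸ interior_subset
    have hzint : z ∈ interior A := by
      by_contra hzc
      have hsub : interior A ⊆ ({y} : Set X) := by
        intro p hp
        rcases hintsub hp with rfl | rfl
        · exact absurd hp hzc
        · rfl
      have := closure_mono hsub (hcl z hzA)
      rw [closure_singleton] at this
      exact hyz this.symm
    have hyint : y ∈ interior A := by
      by_contra hyc
      have hsub : interior A ⊆ ({z} : Set X) := by
        intro p hp
        rcases hintsub hp with rfl | rfl
        · rfl
        · exact absurd hp hyc
      have := closure_mono hsub (hcl y hyA)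
      rw [closure_singleton] at this
      exact hyz this
    have hAopen : IsOpen A := by
      rw [← subset_interior_iff_isOpen]
      intro p hp
      rw [hAeq] at hp
      rcases hp with rfl | rfl
      exacts [hzint, hyint]
    have hzopen : IsOpen ({z} : Set X) := by
      have : ({z} : Set X) = A ∩ {y}ᶜ := by
        rw [hAeq]; ext p
        simp only [mem_singleton_iff, mem_inter_iff, mem_insert_iff, mem_compl_iff]
        constructor
        · rintro rfl; exact ⟨Or.inl rfl, fun h => hyz h.symm⟩
        · rintro ⟨rfl | rfl, hny⟩
          · rfl
          · exact absurd rfl hny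
      rw [this]
      exact hAopen.inter (isClosed_singleton.isOpen_compl)
    have hyopen : IsOpen ({y} : Set X) := by
      have : ({y} : Set X) = A ∩ {z}ᶜ := by
        rw [hAeq]; ext p
        simp only [mem_singleton_iff, mem_inter_iff, mem_insert_iff, mem_compl_iff]
        constructor
        · rintro rfl; exact ⟨Or.inr rfl, hyz⟩
        · rintro ⟨rfl | rfl, hnz⟩
          · exact absurd rfl hnz
          · rfl
      rw [this]
      exact hAopen.inter (isClosed_singleton.isOpen_compl)
    intro p hp
    rw [hAeq] at hp
    rcases hp with rfl | rfl
    exacts [hzopen, hyopen]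
end

section
/- Let (X,f) be a dynamical system on a Hausdorff space X with fⁿ quasi-continuous for all n ∈ ℕ, satisfying TT. Then there is at most one isolated point x ∈ X with |f⁻¹(x)| = 2. -/
open Set Function Topology

section Aux

open Function

variable {X : Type*} [TopologicalSpace X] [T2Space X]

/-- iterate equality iff congruence mod minimal period. -/
lemma iter_eq_iter_iff {f : X → X} {x : X} (hx : x ∈ periodicPts f) (i j : ℕ) :
    f^[i] x = f^[j] x ↔ i ≡ j [MOD Function.minimalPeriod f x] := by
  have hp : 0 < Function.minimalPeriod f x := minimalPeriod_pos_of_mem_periodicPts hx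
  constructor
  · intro h
    have h1 : f^[i % Function.minimalPeriod f x] x = f^[j % Function.minimalPeriod f x] x := by
      rw [iterate_mod_minimalPeriod_eq, iterate_mod_minimalPeriod_eq, h]
    exact iterate_eq_iterate_iff_of_lt_minimalPeriod (Nat.mod_lt _ hp) (Nat.mod_lt _ hp) |>.mp h1
  · intro h
    rw [← iterate_mod_minimalPeriod_eq, ← iterate_mod_minimalPeriod_eq (n := j)]
    rw [h]

/-- In-orbit preimage points are isolated (from quasi-continuity of f). -/
lemma isolated_of_pre {f : X → X} (hqc : QuasiCont f) {x a b : X}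
    (hx : IsOpen ({x} : Set X)) (hab : a ≠ b) (hpre : f ⁻¹' {x} = {a, b}) :
    IsOpen ({a} : Set X) := by
  obtain ⟨U, V, hU, hV, haU, hbV, hd⟩ := t2_separation hab
  have hfa : f a = x := by
    have : a ∈ f ⁻¹' {x} := by rw [hpre]; exact Or.inl rfl
    simpa using this
  obtain ⟨W, hWopen, hWne, hWU, hWim⟩ := hqc a {x} hx (by simp [hfa]) U hU haU
  have hW : W = {a} := by
    apply Set.eq_singleton_iff_nonempty_unique_mem.mpr
    refine ⟨hWne, fun w hw => ?_⟩
    have : w ∈ f ⁻¹' {x} := hWim ⟨w, hw, rfl⟩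
    rw [hpre] at this
    rcases this with h | h
    · exact h
    · exfalso
      have hwU : w ∈ U := hWU hw
      rw [Set.mem_singleton_iff] at h
      subst h
      exact Set.disjoint_left.mp hd hwU hbV
  rwa [hW] at hWopen

/-- TT applied to two distinct isolated points. -/
lemma tt_single {f : X → X} (hTT : TTprop f) {u v : X}
    (hu : IsOpen ({u} : Set X)) (hv : IsOpen ({v} : Set X)) (huv : u ≠ v) :
    ∃ n, 1 ≤ n ∧ (f^[n] u = v ∨ f^[n] v = u) := by
  obtain ⟨n, hn⟩ := hTT {u} {v} hu ⟨u, rfl⟩ hv ⟨v, rfl⟩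
  have hcase : f^[n] u = v ∨ f^[n] v = u := by
    rcases hn with h | h
    · obtain ⟨z, ⟨w, hw, hwz⟩, hz⟩ := h
      rw [Set.mem_singleton_iff] at hw hz
      subst hw; subst hwz
      exact Or.inl hz
    · obtain ⟨z, ⟨w, hw, hwz⟩, hz⟩ := h
      rw [Set.mem_singleton_iff] at hw hz
      subst hw; subst hwz
      exact Or.inr hz
  refine ⟨n, ?_, hcase⟩
  rcases Nat.eq_zero_or_pos n with rfl | h
  · exfalso; simp at hcase; tauto
  · exact h

/-- Given a periodic point x, y = f^[m] x on its orbit with preimage pair {u,v},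
    one of u, v is off the orbit of x. -/
lemma off_orbit {f : X → X} {x : X} (hx : x ∈ periodicPts f) {y u v : X}
    (huv : u ≠ v) (hpre : f ⁻¹' {y} = {u, v}) {m : ℕ} (hm : f^[m] x = y) :
    ∃ w, (w = u ∨ w = v) ∧ f w = y ∧ ∀ k, f^[k] x ≠ w := by
  set p := Function.minimalPeriod f x with hpdef
  have hp : 0 < p := minimalPeriod_pos_of_mem_periodicPts hx
  have hper : f^[p] x = x := (isPeriodicPt_minimalPeriod f x)
  have hmp : f^[m + p] x = y := by
    rw [Function.iterate_add_apply, hper, hm]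
  have hc'y : f (f^[m + p - 1] x) = y := by
    have hs := Function.iterate_succ_apply' f (m + p - 1) x
    have h1 : (m + p - 1).succ = m + p := by omega
    rw [h1] at hs
    rw [← hs, hmp]
  set c := f^[m + p - 1] x with hcdef
  have hcmem : c ∈ ({u, v} : Set X) := by rw [← hpre]; simpa using hc'y
  simp only [Set.mem_insert_iff, Set.mem_singleton_iff] at hcmem
  -- the key: any in-orbit preimage of y equals c
  have hkey : ∀ k, f^[k + 1] x = y → f^[k] x = c := by
    intro k hk
    rw [hcdef]
    rw [iter_eq_iter_iff hx]
    have h1 : f^[k + 1] x = f^[m + p] x := by rw [hk, hmp]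
    have h2 : (k + 1) ≡ (m + p) [MOD minimalPeriod f x] := (iter_eq_iter_iff hx _ _).mp h1
    have h3 : m + p = (m + p - 1) + 1 := by omega
    rw [h3] at h2
    exact Nat.ModEq.add_right_cancel' 1 h2
  rcases hcmem with hcu | hcv
  · refine ⟨v, Or.inr rfl, ?_, ?_⟩
    · have : v ∈ f ⁻¹' {y} := by rw [hpre]; exact Or.inr rfl
      simpa using this
    · intro k hkv
      have hfv : f v = y := by
        have : v ∈ f ⁻¹' {y} := by rw [hpre]; exact Or.inr rfl
        simpa using this
      have : f^[k + 1] x = y := by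
        rw [Function.iterate_succ_apply', hkv, hfv]
      have := hkey k this
      rw [hkv] at this
      exact huv ((this.trans hcu)).symm
  · refine ⟨u, Or.inl rfl, ?_, ?_⟩
    · have : u ∈ f ⁻¹' {y} := by rw [hpre]; exact Or.inl rfl
      simpa using this
    · intro k hku
      have hfu : f u = y := by
        have : u ∈ f ⁻¹' {y} := by rw [hpre]; exact Or.inl rfl
        simpa using this
      have : f^[k + 1] x = y := by
        rw [Function.iterate_succ_apply', hku, hfu]
      have := hkey k this
      rw [hku] at this
      exact huv (this.trans hcv)

lemma main_aux {f : X → X} (hqc : ∀ n : ℕ, QuasiCont (f^[n])) (hTT : TTprop f)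
    {x y : X} (hx : IsOpen ({x} : Set X)) (hy : IsOpen ({y} : Set X))
    (h2x : (f ⁻¹' {x}).ncard = 2) (h2y : (f ⁻¹' {y}).ncard = 2)
    {m : ℕ} (hm : f^[m] x = y) (hxy : x ≠ y) : False := by
  have hqc1 : QuasiCont f := by have := hqc 1; rwa [Function.iterate_one] at this
  obtain ⟨a, b, hab, hpx⟩ := Set.ncard_eq_two.mp h2x
  obtain ⟨c, d, hcd, hpy⟩ := Set.ncard_eq_two.mp h2y
  have hia : IsOpen ({a} : Set X) := isolated_of_pre hqc1 hx hab hpx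
  have hib : IsOpen ({b} : Set X) := by
    apply isolated_of_pre hqc1 hx hab.symm
    rw [hpx, Set.pair_comm]
  have hic : IsOpen ({c} : Set X) := isolated_of_pre hqc1 hy hcd hpy
  have hid : IsOpen ({d} : Set X) := by
    apply isolated_of_pre hqc1 hy hcd.symm
    rw [hpy, Set.pair_comm]
  have hfa : f a = x := by
    have : a ∈ f ⁻¹' {x} := by rw [hpx]; exact Or.inl rfl
    simpa using this
  have hfb : f b = x := by
    have : b ∈ f ⁻¹' {x} := by rw [hpx]; exact Or.inr rfl
    simpa using this
  -- x is periodic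
  have hxper : x ∈ periodicPts f := by
    obtain ⟨n, hn1, hcase⟩ := tt_single hTT hia hib hab
    rw [mem_periodicPts]
    refine ⟨n, hn1, ?_⟩
    show f^[n] x = x
    rcases hcase with h | h
    · calc f^[n] x = f^[n] (f a) := by rw [hfa]
        _ = f (f^[n] a) := by rw [← Function.iterate_succ_apply, Function.iterate_succ_apply']
        _ = x := by rw [h, hfb]
    · calc f^[n] x = f^[n] (f b) := by rw [hfb]
        _ = f (f^[n] b) := by rw [← Function.iterate_succ_apply, Function.iterate_succ_apply']
        _ = x := by rw [h, hfa]
  -- off-orbit preimage of x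
  obtain ⟨w, hwab, hfw, hworb⟩ := off_orbit hxper hab hpx (m := 0) rfl
  -- off-orbit preimage of y
  obtain ⟨w', hwcd, hfw', hworb'⟩ := off_orbit hxper hcd hpy hm
  have hiw : IsOpen ({w} : Set X) := by rcases hwab with rfl | rfl <;> assumption
  have hiw' : IsOpen ({w'} : Set X) := by rcases hwcd with rfl | rfl <;> assumption
  have hww' : w ≠ w' := by
    intro h
    apply hxy
    rw [← hfw, ← hfw', h]
  obtain ⟨n, hn1, hcase⟩ := tt_single hTT hiw hiw' hww'
  rcases hcase with h | h
  · -- f^[n] w = w', but f^[n] w = f^[n-1] x is in orbit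
    apply hworb' (n - 1)
    have : f^[n] w = f^[n - 1] x := by
      have h1 : n = (n - 1) + 1 := by omega
      conv_lhs => rw [h1]
      rw [Function.iterate_succ_apply, hfw]
    rw [← this, h]
  · apply hworb (n - 1 + m)
    have : f^[n] w' = f^[n - 1 + m] x := by
      have h1 : n = (n - 1) + 1 := by omega
      conv_lhs => rw [h1]
      rw [Function.iterate_succ_apply, hfw', ← hm, ← Function.iterate_add_apply]
    rw [← this, h]

end Aux

theorem at_most_one_two_preimage {X : Type*} [TopologicalSpace X] [T2Space X]
    (f : X → X)
    (hqc : ∀ n : ℕ, QuasiCont (f^[n]))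
    (hTT : TTprop f) :
    ∀ x y : X, IsOpen ({x} : Set X) → IsOpen ({y} : Set X) →
      (f ⁻¹' {x}).ncard = 2 → (f ⁻¹' {y}).ncard = 2 → x = y := by
  intro x y hx hy h2x h2y
  by_contra hne
  obtain ⟨m, _, hcase⟩ := tt_single hTT hx hy hne
  rcases hcase with h | h
  · exact absurd (main_aux hqc hTT hx hy h2x h2y h hne) not_false
  · exact absurd (main_aux hqc hTT hy hx h2y h2x h (Ne.symm hne)) not_false
end

section
/- Let (X,f) be a dynamical system on a Hausdorff space X with isolated points, where fⁿ is quasi-continuous for all n ∈ ℕ. If (X,f) satisfies TT, then every point with dense forward orbit is an isolated point, i.e., Trans_f ⊆ Iso_X. -/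
open Set Function Topology

theorem trans_subset_iso {X : Type*} [TopologicalSpace X] [T2Space X]
    (f : X → X)
    (hiso : ∃ x : X, IsOpen ({x} : Set X))
    (hqc : ∀ n : ℕ, QuasiCont (f^[n]))
    (hTT : TTprop f) :
    ∀ x : X, Dense (Set.range fun n : ℕ => f^[n] x) → IsOpen ({x} : Set X) := by
  intro x hx
  obtain ⟨p, hp⟩ := hiso
  obtain ⟨y, hy1, hy2⟩ := hx.exists_mem_open hp ⟨p, rfl⟩
  obtain ⟨n, rfl⟩ := hy1
  obtain ⟨V, hVo, hVne, -, hVim⟩ := hqc n x {p} hp hy2 Set.univ isOpen_univ (Set.mem_univ x)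
  by_cases hxV : V ⊆ {x}
  · obtain ⟨v, hv⟩ := hVne
    have hVeq : V = {x} := Set.Subset.antisymm hxV (by
      have : v = x := hxV hv
      simpa [this] using Set.singleton_subset_iff.2 hv)
    rwa [hVeq] at hVo
  · set V' : Set X := V \ {x} with hV'def
    have hV'o : IsOpen V' := hVo.sdiff isClosed_singleton
    have hV'ne : V'.Nonempty := by
      rw [Set.nonempty_iff_ne_empty]
      intro h
      exact hxV (Set.diff_eq_empty.mp h)
    obtain ⟨z, hz1, hz2⟩ := hx.exists_mem_open hV'o hV'ne
    obtain ⟨m, rfl⟩ := hz1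
    have hm : 1 ≤ m := by
      rcases Nat.eq_zero_or_pos m with h | h
      · exfalso; subst h; exact hz2.2 rfl
      · exact h
    have hnm : f^[n + m] x = f^[n] x := by
      have h1 : f^[n] (f^[m] x) = p := hVim ⟨f^[m] x, hz2.1, rfl⟩
      have h2 : f^[n] x = p := hy2
      rw [Function.iterate_add_apply, h1, h2]
    have key : ∀ k, ∃ j < n + m, f^[j] x = f^[k] x := by
      intro k
      induction k using Nat.strong_induction_on with
      | _ k ih =>
        by_cases h : k < n + m
        · exact ⟨k, h, rfl⟩
        · have hk : k = (k - (n + m)) + (n + m) := by omega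
          have heq : f^[k] x = f^[k - m] x := by
            have e1 : f^[k] x = f^[k - (n + m)] (f^[n + m] x) := by
              rw [← Function.iterate_add_apply, Nat.sub_add_cancel (by omega)]
            rw [e1, hnm, ← Function.iterate_add_apply,
              show k - (n + m) + n = k - m from by omega]
          obtain ⟨j, hj1, hj2⟩ := ih (k - m) (by omega)
          exact ⟨j, hj1, hj2.trans heq.symm⟩
    have hfin : (Set.range fun k : ℕ => f^[k] x).Finite := by
      apply Set.Finite.subset (((Set.finite_Iio (n + m)).image fun k => f^[k] x))
      rintro _ ⟨k, rfl⟩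
      obtain ⟨j, hj1, hj2⟩ := key k
      exact ⟨j, hj1, hj2⟩
    have huniv : (Set.range fun k : ℕ => f^[k] x) = Set.univ := by
      have := hx.closure_eq
      rwa [hfin.isClosed.closure_eq] at this
    have : Finite X := Set.finite_univ_iff.mp (huniv ▸ hfin)
    haveI : DiscreteTopology X := inferInstance
    exact isOpen_discrete _
end

section
/- Let (X,f) be a dynamical system on a Hausdorff space X with isolated points, where fⁿ is quasi-continuous for all n ∈ ℕ, satisfying TT. If there is a point x ∈ Iso_X with f⁻¹(x) = ∅, then x has dense forward orbit and is the unique such point; moreover TT₊ fails, i.e., there exist nonempty open sets U, V with N₊(U,V) = ∅. -/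
open Set Function Topology

theorem empty_preimage_isolated_case {X : Type*} [TopologicalSpace X] [T2Space X]
    (f : X → X)
    (hiso : ∃ z : X, IsOpen ({z} : Set X))
    (hqc : ∀ n : ℕ, QuasiCont (f^[n]))
    (hTT : TTprop f)
    (x : X) (hx : IsOpen ({x} : Set X)) (hpre : f ⁻¹' {x} = ∅) :
    Dense (Set.range fun n : ℕ => f^[n] x) ∧
      (∀ y : X, Dense (Set.range fun n : ℕ => f^[n] y) → y = x) ∧
      (∃ U V : Set X, IsOpen U ∧ U.Nonempty ∧ IsOpen V ∧ V.Nonempty ∧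
        Nplus f U V = ∅) := by
  have hfx : ∀ z : X, f z ≠ x := by
    intro z hz
    have : z ∈ f ⁻¹' {x} := hz
    simp [hpre] at this
  have hiter : ∀ n : ℕ, 0 < n → ∀ z : X, f^[n] z ≠ x := by
    intro n hn z hz
    obtain ⟨m, rfl⟩ := Nat.exists_eq_succ_of_ne_zero hn.ne'
    rw [Function.iterate_succ_apply'] at hz
    exact hfx _ hz
  have hdense : Dense (Set.range fun n : ℕ => f^[n] x) := by
    rw [dense_iff_inter_open]
    intro U hU hUne
    rcases hTT {x} U hx ⟨x, rfl⟩ hU hUne with ⟨n, hn⟩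
    cases hn with
    | inl hn =>
      obtain ⟨y, ⟨z, hz, rfl⟩, hyU⟩ := hn
      simp only [mem_singleton_iff] at hz
      subst hz
      exact ⟨_, hyU, n, rfl⟩
    | inr hn =>
      obtain ⟨y, ⟨z, hz, rfl⟩, hy⟩ := hn
      simp only [mem_singleton_iff] at hy
      rcases Nat.eq_zero_or_pos n with h0 | h0
      · subst h0
        simp only [Function.iterate_zero, id_eq] at hy
        exact ⟨x, hy ▸ hz, 0, rfl⟩
      · exact absurd hy (hiter n h0 z)
  refine ⟨hdense, ?_, ?_⟩
  · intro y hy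
    obtain ⟨z, hz, ⟨n, rfl⟩⟩ := hy.inter_open_nonempty {x} hx ⟨x, rfl⟩
    simp only [mem_singleton_iff] at hz
    rcases Nat.eq_zero_or_pos n with h0 | h0
    · subst h0; simpa using hz
    · exact absurd hz (hiter n h0 y)
  · have hy : ∃ y : X, y ≠ x := by
      by_contra h
      push_neg at h
      exact hfx x (h (f x))
    obtain ⟨y, hy⟩ := hy
    obtain ⟨U, V, hUo, hVo, hyU, hxV, hUV⟩ := t2_separation hy
    refine ⟨U, {x}, hUo, ⟨y, hyU⟩, hx, ⟨x, rfl⟩, ?_⟩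
    ext n
    simp only [Nplus, mem_setOf_eq, mem_empty_iff_false, iff_false]
    rintro ⟨z, ⟨w, hw, rfl⟩, hz⟩
    simp only [mem_singleton_iff] at hz
    rcases Nat.eq_zero_or_pos n with h0 | h0
    · subst h0
      simp only [Function.iterate_zero, id_eq] at hz
      subst hz
      exact hUV.le_bot ⟨hw, hxV⟩
    · exact hiter n h0 w hz
end

section
/- Let (X,f) be a dynamical system on a Hausdorff space X with at least one isolated point, where fⁿ is quasi-continuous for all n ∈ ℕ. If (X,f) satisfies TT and every isolated point has exactly one preimage point, and there exists a periodic isolated point, then X equals the (finite) orbit of that periodic point; in particular all of DO₊, TT₊, TT₊₊ and DO₊₊ hold. -/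
open Set Function Topology

lemma uniq_pre_open {X : Type*} [TopologicalSpace X] (f : X → X)
    (hqc1 : QuasiCont (f^[1])) (z w : X) (hz : IsOpen ({z} : Set X))
    (huniq : ∀ a, f a = z → a = w) (hfw : f w = z) :
    IsOpen ({w} : Set X) := by
  obtain ⟨V, hVo, hVne, -, hVsub⟩ :=
    hqc1 w {z} hz (by simp [hfw]) Set.univ isOpen_univ (Set.mem_univ w)
  have hVsing : V = {w} := by
    refine hVne.subset_singleton_iff.mp (fun v hv => ?_)
    have : f^[1] v ∈ ({z} : Set X) := hVsub ⟨v, hv, rfl⟩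
    simp only [Function.iterate_one, Set.mem_singleton_iff] at this
    exact huniq v this
  exact hVsing ▸ hVo

theorem periodic_isolated_case {X : Type*} [TopologicalSpace X] [T2Space X]
    (f : X → X)
    (hiso : ∃ z : X, IsOpen ({z} : Set X))
    (hqc : ∀ n : ℕ, QuasiCont (f^[n]))
    (hTT : TTprop f)
    (hone : ∀ z : X, IsOpen ({z} : Set X) → ∃! w : X, f w = z)
    (x : X) (hx : IsOpen ({x} : Set X)) (hper : ∃ k : ℕ, 0 < k ∧ f^[k] x = x) :
    (Set.range fun n : ℕ => f^[n] x).Finite ∧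
      (Set.range fun n : ℕ => f^[n] x) = Set.univ ∧
      (∃ y : X, Dense (Set.range fun n : ℕ => f^[n] y)) ∧
      TTplus f ∧
      (∀ U V : Set X, IsOpen U → U.Nonempty → IsOpen V → V.Nonempty →
        (Nplus f U V).Infinite) ∧
      (∃ y : X, omegaLimitSet f y = Set.univ) := by
  obtain ⟨k, hk0, hkx⟩ := hper
  have hperiod : ∀ n, f^[n + k] x = f^[n] x := fun n => by
    rw [Function.iterate_add_apply, hkx]
  have hmul : ∀ n t, f^[n + k * t] x = f^[n] x := by
    intro n t
    induction t with
    | zero => simp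
    | succ t ih =>
      have e : n + k * (t + 1) = (n + k * t) + k := by ring
      rw [e, hperiod, ih]
  have hmod : ∀ n, f^[n] x = f^[n % k] x := by
    intro n
    conv_lhs => rw [← Nat.mod_add_div n k]
    exact hmul (n % k) (n / k)
  -- every orbit point is isolated
  have hisoLe : ∀ j, j ≤ k → IsOpen ({f^[k - j] x} : Set X) := by
    intro j
    induction j with
    | zero => intro _; simpa [hkx] using hx
    | succ j ih =>
      intro hj
      have hz := ih (Nat.le_of_succ_le hj)
      obtain ⟨w', hw', huniq⟩ := hone (f^[k - j] x) hz
      have hfw : f (f^[k - (j + 1)] x) = f^[k - j] x := by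
        have e : k - j = (k - (j + 1)) + 1 := by omega
        rw [e, Function.iterate_succ_apply']
      have hw : f^[k - (j + 1)] x = w' := huniq _ hfw
      have hopen : IsOpen ({w'} : Set X) :=
        uniq_pre_open f (hqc 1) (f^[k - j] x) w' hz (fun a ha => huniq a ha) hw'
      rw [hw]; exact hopen
  have hisoAll : ∀ n, IsOpen ({f^[n] x} : Set X) := by
    intro n
    rw [hmod n]
    have h1 : n % k < k := Nat.mod_lt _ hk0
    have := hisoLe (k - n % k) (Nat.sub_le _ _)
    rwa [Nat.sub_sub_self h1.le] at this
  -- descent: preimages of orbit points are on the orbit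
  have hdesc : ∀ n v j, f^[n] v = f^[j] x → ∃ m, f^[m] x = v := by
    intro n
    induction n with
    | zero => intro v j h; exact ⟨j, h.symm⟩
    | succ n ih =>
      intro v j h
      obtain ⟨w', hw', huniq⟩ := hone (f^[j] x) (hisoAll j)
      have h1 : f (f^[n] v) = f^[j] x := by
        rw [Function.iterate_succ_apply'] at h; exact h
      have h2 : f (f^[j + k - 1] x) = f^[j] x := by
        have e : j + k - 1 + 1 = j + k := by omega
        have h2x := hperiod j
        rw [← e, Function.iterate_succ_apply'] at h2x
        exact h2x
      have h3 : f^[n] v = f^[j + k - 1] x := (huniq _ h1).trans (huniq _ h2).symm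
      exact ih v (j + k - 1) h3
  have hRfin : (Set.range fun n : ℕ => f^[n] x).Finite := by
    refine ((Set.finite_Iio k).image (fun j => f^[j] x)).subset ?_
    rintro _ ⟨n, rfl⟩
    exact ⟨n % k, Nat.mod_lt _ hk0, (hmod n).symm⟩
  have hRuniv : (Set.range fun n : ℕ => f^[n] x) = Set.univ := by
    by_contra h
    have hne : (Set.range fun n : ℕ => f^[n] x)ᶜ.Nonempty := Set.nonempty_compl.mpr h
    have hRo : IsOpen (Set.range fun n : ℕ => f^[n] x)ᶜ := hRfin.isClosed.isOpen_compl
    obtain ⟨n, hn⟩ := hTT {x} _ hx ⟨x, rfl⟩ hRo hne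
    cases hn with
    | inl h1 =>
      obtain ⟨y, ⟨a, ha, rfl⟩, hy2⟩ := h1
      rw [Set.mem_singleton_iff] at ha
      subst ha
      exact hy2 ⟨n, rfl⟩
    | inr h1 =>
      obtain ⟨y, ⟨v, hv, rfl⟩, hy2⟩ := h1
      rw [Set.mem_singleton_iff] at hy2
      have : f^[n] v = f^[0] x := by simpa using hy2
      obtain ⟨m, hm⟩ := hdesc n v 0 this
      exact hv ⟨m, hm⟩
  have hhit : ∀ l m t : ℕ, f^[m + k * (l + 1) - l + k * t] (f^[l] x) = f^[m] x := by
    intro l m t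
    rw [← Function.iterate_add_apply]
    have hl : l ≤ k * (l + 1) :=
      le_trans (Nat.le_succ l) (Nat.le_mul_of_pos_left (l + 1) hk0)
    have e : m + k * (l + 1) - l + k * t + l = m + k * (l + 1 + t) := by
      have : k * (l + 1 + t) = k * (l + 1) + k * t := by ring
      omega
    rw [e]
    exact hmul m (l + 1 + t)
  have hmemNplus : ∀ (U V : Set X) (l m : ℕ), f^[l] x ∈ U → f^[m] x ∈ V →
      ∀ t, m + k * (l + 1) - l + k * t ∈ Nplus f U V := by
    intro U V l m hu hv t
    exact ⟨f^[m] x, ⟨f^[l] x, hu, hhit l m t⟩, hv⟩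
  have hTTp : TTplus f := by
    intro U V hU hUne hV hVne
    obtain ⟨u, hu⟩ := hUne
    obtain ⟨l, rfl⟩ : u ∈ Set.range fun n : ℕ => f^[n] x := hRuniv ▸ Set.mem_univ u
    obtain ⟨v, hv⟩ := hVne
    obtain ⟨m, rfl⟩ : v ∈ Set.range fun n : ℕ => f^[n] x := hRuniv ▸ Set.mem_univ v
    exact ⟨_, hmemNplus U V l m hu hv 0⟩
  refine ⟨hRfin, hRuniv, ⟨x, hRuniv ▸ dense_univ⟩, hTTp, ?_, ⟨x, ?_⟩⟩
  · intro U V hU hUne hV hVne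
    obtain ⟨u, hu⟩ := hUne
    obtain ⟨l, rfl⟩ : u ∈ Set.range fun n : ℕ => f^[n] x := hRuniv ▸ Set.mem_univ u
    obtain ⟨v, hv⟩ := hVne
    obtain ⟨m, rfl⟩ : v ∈ Set.range fun n : ℕ => f^[n] x := hRuniv ▸ Set.mem_univ v
    apply Set.infinite_of_injective_forall_mem
      (f := fun t : ℕ => m + k * (l + 1) - l + k * t)
    · intro a b hab
      simp only at hab
      have : k * a = k * b := by omega
      exact Nat.eq_of_mul_eq_mul_left hk0 this
    · intro t
      exact hmemNplus U V l m hu hv t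
  · apply Set.eq_univ_of_forall
    intro y
    simp only [omegaLimitSet, Set.mem_iInter]
    intro κ
    obtain ⟨m, hm⟩ : y ∈ Set.range fun n : ℕ => f^[n] x := hRuniv ▸ Set.mem_univ y
    apply subset_closure
    refine ⟨m + k * κ, ?_, (hmul m κ).trans hm⟩
    have : κ ≤ k * κ := Nat.le_mul_of_pos_left κ hk0
    omega
end

section
/- Let (X,f) be a dynamical system on a Hausdorff space X with at least one isolated point, where fⁿ is quasi-continuous for all n ∈ ℕ. Then (X,f) satisfies TT if and only if (X,f) satisfies DO: there is an orbit sequence ⟨x_k : k ∈ ℤ⟩ (with f(x_k) = x_{k+1} for all k), or an orbit sequence ⟨x_k : k ≥ n⟩ with f(x_k) = x_{k+1} for k ≥ n and f⁻¹(x_n) = ∅, whose set of elements is dense in X. -/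
open Set Function Topology

lemma exists_isolated_preimage {X : Type*} [TopologicalSpace X] [T2Space X]
    (f : X → X) (z : X) (hz : IsOpen ({z} : Set X))
    (hqc : ∀ n : ℕ, QuasiCont (f^[n])) (htt : TTprop f)
    (V : Set X) (hV : IsOpen V) (hVne : V.Nonempty)
    (hVO : ∀ v ∈ V, ∀ n : ℕ, f^[n] z ≠ v) :
    ∃ w, w ∈ V ∧ IsOpen ({w} : Set X) ∧ ∃ n, 1 ≤ n ∧ f^[n] w = z := by
  classical
  have hex : ∃ n : ℕ, ∃ V' : Set X,
      IsOpen V' ∧ V'.Nonempty ∧ V' ⊆ V ∧ ∀ u ∈ V', f^[n] u = z := by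
    obtain ⟨n, hn⟩ := htt {z} V hz ⟨z, rfl⟩ hV hVne
    simp only [Nplus, mem_union, mem_setOf_eq] at hn
    rcases hn with hn | hn
    · obtain ⟨y, ⟨u, hu, hfu⟩, hyV⟩ := hn
      rw [mem_singleton_iff] at hu
      subst hu
      exact absurd hfu (hVO y hyV n)
    · obtain ⟨y, ⟨v, hvV, hfv⟩, hyz⟩ := hn
      rw [mem_singleton_iff] at hyz
      have hfz : f^[n] v ∈ ({z} : Set X) := by rw [hfv, hyz]; exact rfl
      obtain ⟨V', h1, h2, h3, h4⟩ := hqc n v {z} hz hfz V hV hvV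
      exact ⟨n, V', h1, h2, h3, fun u hu => h4 ⟨u, hu, rfl⟩⟩
  set N := Nat.find hex with hNdef
  obtain ⟨V', hV'o, hV'ne, hV'sub, hV'z⟩ := Nat.find_spec hex
  have hN1 : 1 ≤ N := by
    by_contra h
    have hN0 : N = 0 := by omega
    obtain ⟨u, hu⟩ := hV'ne
    have : f^[0] u = z := by rw [← hN0]; exact hV'z u hu
    simp only [iterate_zero_apply] at this
    exact hVO u (hV'sub hu) 0 (by simpa [this] using rfl)
  -- contradiction machine
  have key : ∀ (m : ℕ) (u : X) (W₂ : Set X), IsOpen W₂ → W₂ ⊆ V' → u ∈ V' →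
      f^[m] u ∈ W₂ → 1 ≤ m → False := by
    intro m u W₂ hW₂o hW₂sub huV' hmu hm1
    have hmN : m < N := by
      by_contra h'
      have hNm : N ≤ m := by omega
      have : f^[m] u = f^[m - N] z := by
        have h2 := Function.iterate_add_apply f (m - N) N u
        rw [hV'z u huV'] at h2
        rw [← h2]; congr 1; omega
      exact hVO (f^[m] u) (hV'sub (hW₂sub hmu)) (m - N) this.symm
    have hvz : f^[N - m] (f^[m] u) ∈ ({z} : Set X) := by
      rw [← Function.iterate_add_apply]
      have h2 : N - m + m = N := by omega
      rw [h2, hV'z u huV']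
      exact rfl
    obtain ⟨V'', h1, h2, h3, h4⟩ := hqc (N - m) (f^[m] u) {z} hz hvz W₂ hW₂o hmu
    have : N ≤ N - m := by
      apply Nat.find_min' hex
      exact ⟨V'', h1, h2, (h3.trans hW₂sub).trans hV'sub, fun u hu => h4 ⟨u, hu, rfl⟩⟩
    omega
  have hss : ∀ a ∈ V', ∀ b ∈ V', a = b := by
    by_contra h
    push_neg at h
    obtain ⟨a, ha, b, hb, hab⟩ := h
    obtain ⟨A, B, hAo, hBo, haA, hbB, hABd⟩ := t2_separation hab
    have hU1o : IsOpen (V' ∩ A) := hV'o.inter hAo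
    have hU2o : IsOpen (V' ∩ B) := hV'o.inter hBo
    obtain ⟨m, hm⟩ := htt (V' ∩ A) (V' ∩ B) hU1o ⟨a, ha, haA⟩ hU2o ⟨b, hb, hbB⟩
    simp only [Nplus, mem_union, mem_setOf_eq] at hm
    have hdisj : ∀ x : X, x ∈ V' ∩ A → x ∈ V' ∩ B → False := by
      intro x h1 h2
      exact hABd.le_bot ⟨h1.2, h2.2⟩
    rcases hm with hm | hm
    · obtain ⟨y, ⟨u, hu, hfu⟩, hy2⟩ := hm
      have hm1 : 1 ≤ m := by
        rcases Nat.eq_zero_or_pos m with h0 | h0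
        · subst h0; simp only [iterate_zero_apply] at hfu
          exact absurd (hdisj u hu (hfu ▸ hy2)) (fun h => h)
        · exact h0
      exact key m u (V' ∩ B) hU2o inter_subset_left hu.1 (hfu ▸ hy2) hm1
    · obtain ⟨y, ⟨u, hu, hfu⟩, hy2⟩ := hm
      have hm1 : 1 ≤ m := by
        rcases Nat.eq_zero_or_pos m with h0 | h0
        · subst h0; simp only [iterate_zero_apply] at hfu
          exact absurd (hdisj u (hfu ▸ hy2) hu) (fun h => h)
        · exact h0
      exact key m u (V' ∩ A) hU1o inter_subset_left hu.1 (hfu ▸ hy2) hm1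
  obtain ⟨w, hw⟩ := hV'ne
  have hVw : V' = {w} := by
    apply Subset.antisymm
    · intro b hb; exact hss b hb w hw
    · intro b hb; rw [mem_singleton_iff] at hb; subst hb; exact hw
  exact ⟨w, hV'sub hw, hVw ▸ hV'o, N, hN1, hV'z w hw⟩


theorem TT_iff_DO_with_isolated {X : Type*} [TopologicalSpace X] [T2Space X]
    (f : X → X)
    (hiso : ∃ z : X, IsOpen ({z} : Set X))
    (hqc : ∀ n : ℕ, QuasiCont (f^[n])) :
    TTprop f ↔
      ((∃ x : ℤ → X, (∀ k : ℤ, f (x k) = x (k + 1)) ∧ Dense (Set.range x)) ∨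
        (∃ n : ℕ, ∃ x : ℕ → X, (∀ k ≥ n, f (x k) = x (k + 1)) ∧
          f ⁻¹' {x n} = ∅ ∧ Dense {y : X | ∃ k ≥ n, x k = y})) := by
  classical
  constructor
  · -- TT → DO
    intro htt
    obtain ⟨z, hz⟩ := hiso
    set O : Set X := {y | ∃ n : ℕ, f^[n] z = y} with hO
    set I' : Set X := {w | IsOpen ({w} : Set X) ∧ w ∉ O ∧ ∃ n : ℕ, f^[n] w = z} with hI'
    set d : X → ℕ := fun w => sInf {n : ℕ | f^[n] w = z} with hdDef
    have hd_spec : ∀ w : X, (∃ n : ℕ, f^[n] w = z) → f^[d w] w = z := by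
      intro w h
      exact Nat.sInf_mem h
    have hd_min : ∀ (w : X) (k : ℕ), f^[k] w = z → d w ≤ k := by
      intro w k h
      exact Nat.sInf_le h
    have hdz : ∀ w ∈ I', f^[d w] w = z := fun w hw => hd_spec w hw.2.2
    have hd_pos : ∀ w ∈ I', 1 ≤ d w := by
      intro w hw
      by_contra h
      have h0 : d w = 0 := by omega
      have h1 := hdz w hw
      rw [h0] at h1
      simp only [iterate_zero_apply] at h1
      exact hw.2.1 ⟨0, by simp [h1]⟩
    have lemA' : ∀ U : Set X, IsOpen U → U.Nonempty → (∀ v ∈ U, v ∉ O) →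
        ∃ w ∈ U, w ∈ I' := by
      intro U hU hUne hUO
      obtain ⟨w, hwU, hwo, n, _, hnz⟩ :=
        exists_isolated_preimage f z hz hqc htt U hU hUne
          (fun v hv n h => hUO v hv ⟨n, h⟩)
      exact ⟨w, hwU, hwo, hUO w hwU, n, hnz⟩
    have stepD : ∀ w₁ ∈ I', ∀ w₂ ∈ I', ∀ m : ℕ, 1 ≤ m → f^[m] w₁ = w₂ →
        d w₁ = m + d w₂ := by
      intro w₁ h1 w₂ h2 m hm hfm
      have hmd : m < d w₁ := by
        by_contra h'
        have hle : d w₁ ≤ m := by omega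
        refine absurd (?_ : w₂ ∈ O) h2.2.1
        refine ⟨m - d w₁, ?_⟩
        calc f^[m - d w₁] z = f^[m - d w₁] (f^[d w₁] w₁) := by rw [hdz w₁ h1]
          _ = f^[m - d w₁ + d w₁] w₁ := (Function.iterate_add_apply f _ _ w₁).symm
          _ = f^[m] w₁ := by congr 1; omega
          _ = w₂ := hfm
      have ha : d w₂ ≤ d w₁ - m := by
        apply hd_min
        calc f^[d w₁ - m] w₂ = f^[d w₁ - m] (f^[m] w₁) := by rw [hfm]
          _ = f^[d w₁ - m + m] w₁ := (Function.iterate_add_apply f _ _ w₁).symm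
          _ = f^[d w₁] w₁ := by congr 1; omega
          _ = z := hdz w₁ h1
      have hb : d w₁ ≤ d w₂ + m := by
        apply hd_min
        calc f^[d w₂ + m] w₁ = f^[d w₂] (f^[m] w₁) := Function.iterate_add_apply f _ _ w₁
          _ = f^[d w₂] w₂ := by rw [hfm]
          _ = z := hdz w₂ h2
      omega
    have comp : ∀ w₁ ∈ I', ∀ w₂ ∈ I', w₁ ≠ w₂ →
        ∃ m : ℕ, 1 ≤ m ∧ (f^[m] w₁ = w₂ ∨ f^[m] w₂ = w₁) := by
      intro w₁ h1 w₂ h2 hne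
      obtain ⟨m, hm⟩ := htt {w₁} {w₂} h1.1 ⟨w₁, rfl⟩ h2.1 ⟨w₂, rfl⟩
      simp only [Nplus, mem_union, mem_setOf_eq] at hm
      rcases hm with hm | hm
      · obtain ⟨y, ⟨u, hu, hfu⟩, hy⟩ := hm
        rw [mem_singleton_iff] at hu hy
        have heq : f^[m] w₁ = w₂ := by rw [← hu, hfu, hy]
        have hm1 : 1 ≤ m := by
          rcases Nat.eq_zero_or_pos m with h0 | h0
          · subst h0; simp only [iterate_zero_apply] at heq; exact absurd heq hne
          · exact h0
        exact ⟨m, hm1, Or.inl heq⟩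
      · obtain ⟨y, ⟨u, hu, hfu⟩, hy⟩ := hm
        rw [mem_singleton_iff] at hu hy
        have heq : f^[m] w₂ = w₁ := by rw [← hu, hfu, hy]
        have hm1 : 1 ≤ m := by
          rcases Nat.eq_zero_or_pos m with h0 | h0
          · subst h0; simp only [iterate_zero_apply] at heq; exact absurd heq.symm hne
          · exact h0
        exact ⟨m, hm1, Or.inr heq⟩
    have lemE : ∀ w₁ ∈ I', ∀ w₂ ∈ I', d w₂ ≤ d w₁ → f^[d w₁ - d w₂] w₁ = w₂ := by
      intro w₁ h1 w₂ h2 hle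
      by_cases heq : w₁ = w₂
      · subst heq; simp
      · obtain ⟨m, hm1, hc⟩ := comp w₁ h1 w₂ h2 heq
        rcases hc with hc | hc
        · have hD := stepD w₁ h1 w₂ h2 m hm1 hc
          have hm : m = d w₁ - d w₂ := by omega
          rw [← hm]; exact hc
        · have hD := stepD w₂ h2 w₁ h1 m hm1 hc
          exfalso; omega
    by_cases hub : ∀ k : ℕ, ∃ w ∈ I', k ≤ d w
    · -- unbounded depths: bi-infinite orbit
      left
      choose c hcI hcd using hub
      have lemF : ∀ w ∈ I', ∀ k : ℕ, k ≤ d w →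
          f^[d w - k] w = f^[d (c k) - k] (c k) := by
        intro w hw k hk
        rcases le_total (d w) (d (c k)) with h | h
        · have h2 := lemE (c k) (hcI k) w hw h
          calc f^[d w - k] w = f^[d w - k] (f^[d (c k) - d w] (c k)) := by rw [h2]
            _ = f^[(d w - k) + (d (c k) - d w)] (c k) :=
                (Function.iterate_add_apply f _ _ _).symm
            _ = f^[d (c k) - k] (c k) := by congr 1; omega
        · have h2 := lemE w hw (c k) (hcI k) h
          have h3 := hcd k
          calc f^[d w - k] w = f^[(d (c k) - k) + (d w - d (c k))] w := by congr 1; omega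
            _ = f^[d (c k) - k] (f^[d w - d (c k)] w) := Function.iterate_add_apply f _ _ _
            _ = f^[d (c k) - k] (c k) := by rw [h2]
      refine ⟨fun j => match j with
        | .ofNat m => f^[m] z
        | .negSucc m => f^[d (c (m+1)) - (m+1)] (c (m+1)), ?_, ?_⟩
      · intro k
        cases k with
        | ofNat m =>
          show f (f^[m] z) = f^[m+1] z
          exact (Function.iterate_succ_apply' f m z).symm
        | negSucc m =>
          cases m with
          | zero =>
            show f (f^[d (c 1) - 1] (c 1)) = f^[0] z
            have h1 : 1 ≤ d (c 1) := hcd 1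
            calc f (f^[d (c 1) - 1] (c 1)) = f^[d (c 1) - 1 + 1] (c 1) :=
                  (Function.iterate_succ_apply' f _ _).symm
              _ = f^[d (c 1)] (c 1) := by congr 1; omega
              _ = z := hdz (c 1) (hcI 1)
          | succ m =>
            show f (f^[d (c (m+2)) - (m+2)] (c (m+2))) = f^[d (c (m+1)) - (m+1)] (c (m+1))
            have h2 : m + 2 ≤ d (c (m+2)) := hcd (m+2)
            calc f (f^[d (c (m+2)) - (m+2)] (c (m+2)))
                = f^[d (c (m+2)) - (m+2) + 1] (c (m+2)) :=
                  (Function.iterate_succ_apply' f _ _).symm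
              _ = f^[d (c (m+2)) - (m+1)] (c (m+2)) := by congr 1; omega
              _ = f^[d (c (m+1)) - (m+1)] (c (m+1)) := lemF (c (m+2)) (hcI (m+2)) (m+1) (by omega)
      · rw [dense_iff_inter_open]
        intro U hU hUne
        by_cases hUO : ∃ v ∈ U, v ∈ O
        · obtain ⟨v, hvU, n, hn⟩ := hUO
          exact ⟨v, hvU, ⟨Int.ofNat n, hn⟩⟩
        · push_neg at hUO
          obtain ⟨w, hwU, hwI⟩ := lemA' U hU hUne hUO
          refine ⟨w, hwU, ⟨Int.negSucc (d w - 1), ?_⟩⟩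
          show f^[d (c (d w - 1 + 1)) - (d w - 1 + 1)] (c (d w - 1 + 1)) = w
          have h1 : d w - 1 + 1 = d w := by have := hd_pos w hwI; omega
          rw [h1]
          have h2 := lemF w hwI (d w) le_rfl
          simp only [Nat.sub_self, iterate_zero_apply] at h2
          exact h2.symm
    · -- bounded depths
      push_neg at hub
      obtain ⟨K, hK⟩ := hub
      have hq : ∃ q : X, ∀ U : Set X, IsOpen U → U.Nonempty → ∃ i : ℕ, f^[i] q ∈ U := by
        by_cases hI : ∃ w, w ∈ I'
        · have hmax : ∃ w₀ ∈ I', ∀ w ∈ I', d w ≤ d w₀ := by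
            by_contra h
            push_neg at h
            have hall : ∀ k : ℕ, ∃ w ∈ I', k ≤ d w := by
              intro k
              induction k with
              | zero => obtain ⟨w, hw⟩ := hI; exact ⟨w, hw, Nat.zero_le _⟩
              | succ k ih =>
                obtain ⟨w, hw, hkw⟩ := ih
                obtain ⟨w', hw', hlt⟩ := h w hw
                exact ⟨w', hw', by omega⟩
            obtain ⟨w, hw, hKw⟩ := hall K
            have := hK w hw
            omega
          obtain ⟨q, hqI, hqmax⟩ := hmax
          refine ⟨q, fun U hU hUne => ?_⟩
          by_cases hUO : ∃ v ∈ U, v ∈ O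
          · obtain ⟨v, hvU, n, hn⟩ := hUO
            refine ⟨n + d q, ?_⟩
            rw [Function.iterate_add_apply, hdz q hqI, hn]
            exact hvU
          · push_neg at hUO
            obtain ⟨w, hwU, hwI⟩ := lemA' U hU hUne hUO
            refine ⟨d q - d w, ?_⟩
            rw [lemE q hqI w hwI (hqmax w hwI)]
            exact hwU
        · refine ⟨z, fun U hU hUne => ?_⟩
          by_cases hUO : ∃ v ∈ U, v ∈ O
          · obtain ⟨v, hvU, n, hn⟩ := hUO
            exact ⟨n, by rw [hn]; exact hvU⟩
          · push_neg at hUO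
            obtain ⟨w, _, hwI⟩ := lemA' U hU hUne hUO
            exact absurd ⟨w, hwI⟩ hI
      obtain ⟨q, hq⟩ := hq
      set g : X → X := fun x => if h : ∃ u, f u = x then h.choose else x with hgDef
      have hg : ∀ x : X, (∃ u, f u = x) → f (g x) = x := by
        intro x h
        simp only [hgDef, dif_pos h]
        exact h.choose_spec
      by_cases hinf : ∀ k : ℕ, ∃ u, f u = g^[k] q
      · left
        have hstep : ∀ k : ℕ, f (g^[k+1] q) = g^[k] q := by
          intro k
          rw [Function.iterate_succ_apply']
          exact hg _ (hinf k)
        refine ⟨fun j => match j with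
          | .ofNat m => f^[m] q
          | .negSucc m => g^[m+1] q, ?_, ?_⟩
        · intro k
          cases k with
          | ofNat m =>
            show f (f^[m] q) = f^[m+1] q
            exact (Function.iterate_succ_apply' f m q).symm
          | negSucc m =>
            cases m with
            | zero =>
              show f (g^[1] q) = f^[0] q
              exact hstep 0
            | succ m =>
              show f (g^[m+2] q) = g^[m+1] q
              exact hstep (m+1)
        · rw [dense_iff_inter_open]
          intro U hU hUne
          obtain ⟨i, hi⟩ := hq U hU hUne
          exact ⟨f^[i] q, hi, ⟨Int.ofNat i, rfl⟩⟩
      · right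
        push_neg at hinf
        have hk₀spec := Nat.find_spec hinf
        set k₀ := Nat.find hinf with hk₀def
        have hmin : ∀ j, j < k₀ → ∃ u, f u = g^[j] q := by
          intro j hj
          have := Nat.find_min hinf hj
          push_neg at this
          exact this
        have hchain : ∀ j, j ≤ k₀ → f^[j] (g^[j] q) = q := by
          intro j
          induction j with
          | zero => intro _; rfl
          | succ j ih =>
            intro hj
            have h1 : f (g^[j+1] q) = g^[j] q := by
              rw [Function.iterate_succ_apply']
              exact hg _ (hmin j (by omega))
            rw [Function.iterate_succ_apply, h1]
            exact ih (by omega)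
        refine ⟨0, fun k => f^[k] (g^[k₀] q), fun k _ => (Function.iterate_succ_apply' f k _).symm,
          ?_, ?_⟩
        · apply Set.eq_empty_iff_forall_notMem.mpr
          intro u hu
          rw [mem_preimage, mem_singleton_iff] at hu
          exact hk₀spec u hu
        · rw [dense_iff_inter_open]
          intro U hU hUne
          obtain ⟨i, hi⟩ := hq U hU hUne
          refine ⟨f^[i] q, hi, i + k₀, by omega, ?_⟩
          show f^[i + k₀] (g^[k₀] q) = f^[i] q
          have h1 : f^[i + k₀] (g^[k₀] q) = f^[i] (f^[k₀] (g^[k₀] q)) :=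
            Function.iterate_add_apply f i k₀ _
          rw [h1, hchain k₀ le_rfl]
  · -- DO → TT
    intro hdo U V hU hUne hV hVne
    rcases hdo with ⟨x, hx, hd⟩ | ⟨n, x, hx, _, hd⟩
    · have hit : ∀ (i : ℤ) (m : ℕ), f^[m] (x i) = x (i + m) := by
        intro i m
        induction m with
        | zero => simp
        | succ m ih =>
          rw [Function.iterate_succ_apply', ih, hx]
          congr 1
          push_cast
          ring
      obtain ⟨u, huU, i, hxi⟩ := hd.inter_open_nonempty U hU hUne
      obtain ⟨v, hvV, j, hxj⟩ := hd.inter_open_nonempty V hV hVne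
      rcases le_total i j with hij | hij
      · refine ⟨(j - i).toNat, Set.mem_union_left _ ⟨x j, ⟨x i, by rw [hxi]; exact huU, ?_⟩,
          by rw [hxj]; exact hvV⟩⟩
        rw [hit i]
        congr 1
        omega
      · refine ⟨(i - j).toNat, Set.mem_union_right _ ⟨x i, ⟨x j, by rw [hxj]; exact hvV, ?_⟩,
          by rw [hxi]; exact huU⟩⟩
        rw [hit j]
        congr 1
        omega
    · have hit : ∀ i : ℕ, n ≤ i → ∀ m : ℕ, f^[m] (x i) = x (i + m) := by
        intro i hi m
        induction m with
        | zero => simp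
        | succ m ih =>
          rw [Function.iterate_succ_apply', ih, hx (i + m) (by omega)]
          exact congrArg x (by omega)
      obtain ⟨u, huU, i, hin, hxi⟩ := hd.inter_open_nonempty U hU hUne
      obtain ⟨v, hvV, j, hjn, hxj⟩ := hd.inter_open_nonempty V hV hVne
      rcases le_total i j with hij | hij
      · refine ⟨j - i, Set.mem_union_left _ ⟨x j, ⟨x i, by rw [hxi]; exact huU, ?_⟩,
          by rw [hxj]; exact hvV⟩⟩
        rw [hit i hin]
        congr 1
        omega
      · refine ⟨i - j, Set.mem_union_right _ ⟨x i, ⟨x j, by rw [hxj]; exact hvV, ?_⟩,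
          by rw [hxi]; exact huU⟩⟩
        rw [hit j hjn]
        congr 1
        omega
end
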